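/- arXiv:2004.06595 — 5 statements merged into one kernel-verified Lean document; each statement's English description precedes it below -/
import Mathlib

section
/- For every graph property Φ and every positive integer k, there exists a unique finitely supported function a from isomorphism classes of finite simple graphs to ℚ such that for every finite simple graph G, #IndSub(Φ,k,G) = Σ_H a(H) · #Hom(H,G), where the sum ranges over all isomorphism classes of finite simple graphs H. -/
open SimpleGraph

/-- A graph property: for each number of vertices `n`, a predicate on simple graphs
with vertex set `Fin n`. -/
abbrev GraphProperty := ∀ n : ℕ, SimpleGraph (Fin n) → Prop

/-- Invariance of a graph property under graph isomorphism. -/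
def Invariant (Φ : GraphProperty) : Prop :=
  ∀ (n : ℕ) (G G' : SimpleGraph (Fin n)), Nonempty (G ≃g G') → (Φ n G ↔ Φ n G')

/-- `indSub Φ k G` is the number of `k`-element vertex subsets `S` of `G` such that the
induced subgraph `G[S]` satisfies `Φ`. -/
noncomputable def indSub (Φ : GraphProperty) (k : ℕ) {V : Type} [Fintype V]
    (G : SimpleGraph V) : ℕ :=
  Nat.card {S : Finset V // S.card = k ∧
    ∃ e : Fin k ≃ (S : Set V), Φ k ((G.induce (S : Set V)).comap e)}

/-- Graphs on `Fin n` up to isomorphism. -/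
instance graphSetoid (n : ℕ) : Setoid (SimpleGraph (Fin n)) where
  r G G' := Nonempty (G ≃g G')
  iseqv := by
    refine ⟨fun G => ⟨RelIso.refl _⟩, ?_, ?_⟩
    · rintro G G' ⟨e⟩; exact ⟨e.symm⟩
    · rintro G G' G'' ⟨e⟩ ⟨f⟩; exact ⟨e.trans f⟩

/-- Isomorphism classes of graphs on `n` vertices. -/
abbrev GraphClass (n : ℕ) := Quotient (graphSetoid n)

/-- The number of graph homomorphisms from `H` to `G`. -/
noncomputable def homCount {n : ℕ} (H : SimpleGraph (Fin n)) {V : Type} [Fintype V]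
    (G : SimpleGraph V) : ℕ :=
  Nat.card (H →g G)

/-- The number of homomorphisms from (a representative of) an isomorphism class to `G`. -/
noncomputable def classHomCount {n : ℕ} (c : GraphClass n) {V : Type} [Fintype V]
    (G : SimpleGraph V) : ℕ :=
  homCount c.out G

/-! ### Auxiliary definitions -/

instance homFinite {W V : Type} [Finite W] [Finite V] {H : SimpleGraph W} {G : SimpleGraph V} :
    Finite (H →g G) :=
  Finite.of_injective (fun f => (f : W → V)) DFunLike.coe_injective

noncomputable instance setoidFintype (n : ℕ) : Fintype (Setoid (Fin n)) := by
  have : Finite (Setoid (Fin n)) :=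
    Finite.of_injective (fun s => (s.r : Fin n → Fin n → Prop))
      (fun s t h => Setoid.ext fun a b => by rw [show s.r = t.r from h])
  exact Fintype.ofFinite _

noncomputable instance graphFintype (n : ℕ) : Fintype (SimpleGraph (Fin n)) :=
  Fintype.ofFinite _

noncomputable instance graphClassFintype (n : ℕ) : Fintype (GraphClass n) :=
  Fintype.ofFinite _

/-- Number of injective homomorphisms. -/
noncomputable def injCount {W V : Type} [Fintype W] [Fintype V] (H : SimpleGraph W)
    (G : SimpleGraph V) : ℕ :=
  Nat.card {f : H →g G // Function.Injective f}

/-- Number of embeddings `f` of `Fin k` into `V` whose induced pullback graph is exactly `H`. -/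
noncomputable def indInjCount {k : ℕ} {V : Type} [Fintype V] (H : SimpleGraph (Fin k))
    (G : SimpleGraph V) : ℕ :=
  Nat.card {f : Fin k ↪ V // G.comap ⇑f = H}

/-- The quotient graph of `H` by a setoid `s`. -/
def QuotGraph {n : ℕ} (H : SimpleGraph (Fin n)) (s : Setoid (Fin n)) :
    SimpleGraph (Quotient s) where
  Adj x y := x ≠ y ∧ ∃ u v : Fin n, Quotient.mk s u = x ∧ Quotient.mk s v = y ∧ H.Adj u v
  symm := ⟨by rintro x y ⟨hxy, u, v, hu, hv, h⟩; exact ⟨hxy.symm, v, u, hv, hu, h.symm⟩⟩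
  loopless := ⟨by rintro x ⟨h, _⟩; exact h rfl⟩

/-- A setoid is independent for `H` if related vertices are never adjacent. -/
def IndepSetoid {n : ℕ} (H : SimpleGraph (Fin n)) (s : Setoid (Fin n)) : Prop :=
  ∀ u v : Fin n, s u v → ¬H.Adj u v

def botSetoid (n : ℕ) : Setoid (Fin n) := ⟨Eq, eq_equivalence⟩

/-- The isomorphism class of a graph on an arbitrary finite vertex type. -/
noncomputable def toClass {W : Type} [Fintype W] (K : SimpleGraph W) : Σ n, GraphClass n :=
  ⟨Fintype.card W, ⟦K.comap ⇑(Fintype.equivFin W).symm⟧⟩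

noncomputable def classInjCount (c : Σ n, GraphClass n) {V : Type} [Fintype V]
    (G : SimpleGraph V) : ℕ :=
  injCount c.2.out G

/-- Iso from a comap along an equivalence. -/
def comapIso {α β : Type} (e : α ≃ β) (G : SimpleGraph β) : G.comap ⇑e ≃g G := ⟨e, Iff.rfl⟩

/-! ### Basic invariance lemmas -/

theorem homCount_iso_left {n : ℕ} {H H' : SimpleGraph (Fin n)} (e : H ≃g H')
    {V : Type} [Fintype V] (G : SimpleGraph V) : homCount H G = homCount H' G := by
  refine Nat.card_congr ⟨fun f => f.comp e.symm.toHom, fun f => f.comp e.toHom, ?_, ?_⟩ <;>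
    intro f <;> ext v <;> simp

theorem classHomCount_mk {n : ℕ} (H : SimpleGraph (Fin n)) {V : Type} [Fintype V]
    (G : SimpleGraph V) : classHomCount (⟦H⟧ : GraphClass n) G = homCount H G := by
  obtain ⟨e⟩ := Quotient.mk_out (s := graphSetoid n) H
  exact homCount_iso_left e G

theorem injCount_iso_left {W W' V : Type} [Fintype W] [Fintype W'] [Fintype V]
    {H : SimpleGraph W} {H' : SimpleGraph W'} (e : H ≃g H') (G : SimpleGraph V) :
    injCount H G = injCount H' G := by
  refine Nat.card_congr ⟨fun f => ⟨f.1.comp e.symm.toHom, ?_⟩, fun f => ⟨f.1.comp e.toHom, ?_⟩,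
    ?_, ?_⟩
  · exact f.2.comp (Equiv.injective e.symm.toEquiv)
  · exact f.2.comp (Equiv.injective e.toEquiv)
  · intro f; ext v; simp
  · intro f; ext v; simp

/-! ### Sigma class equality helpers -/

theorem sigma_class_eq {m m' : ℕ} (h : m = m') {A : SimpleGraph (Fin m)}
    {A' : SimpleGraph (Fin m')} (hiso : Nonempty (A ≃g A'.comap ⇑(finCongr h))) :
    (⟨m, ⟦A⟧⟩ : Σ n, GraphClass n) = ⟨m', ⟦A'⟧⟩ := by
  subst h
  obtain ⟨e⟩ := hiso
  have : A'.comap ⇑(finCongr rfl) = A' := by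
    ext i j; simp
  rw [this] at e
  exact congrArg (fun q => (⟨m, q⟩ : Σ n, GraphClass n)) (Quotient.sound ⟨e⟩)

theorem toClass_eq_of_iso {W W' : Type} [Fintype W] [Fintype W'] {K : SimpleGraph W}
    {K' : SimpleGraph W'} (e : K ≃g K') : toClass K = toClass K' := by
  have h : Fintype.card W = Fintype.card W' := Fintype.card_congr e.toEquiv
  refine sigma_class_eq h ⟨?_⟩
  exact ((comapIso (Fintype.equivFin W).symm K).trans e).trans
    (((comapIso (finCongr h) (K'.comap ⇑(Fintype.equivFin W').symm)).trans
      (comapIso (Fintype.equivFin W').symm K')).symm)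

theorem toClass_fin {n : ℕ} (H : SimpleGraph (Fin n)) :
    toClass H = ⟨n, ⟦H⟧⟩ := by
  have h : Fintype.card (Fin n) = n := Fintype.card_fin n
  refine sigma_class_eq h ⟨?_⟩
  exact (comapIso (Fintype.equivFin (Fin n)).symm H).trans (comapIso (finCongr h) H).symm

theorem classInjCount_toClass {W V : Type} [Fintype W] [Fintype V] (K : SimpleGraph W)
    (G : SimpleGraph V) : classInjCount (toClass K) G = injCount K G := by
  unfold classInjCount toClass
  obtain ⟨e⟩ := Quotient.mk_out (s := graphSetoid (Fintype.card W)) (K.comap ⇑(Fintype.equivFin W).symm)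
  exact (injCount_iso_left e G).trans (injCount_iso_left (comapIso (Fintype.equivFin W).symm K) G)

/-! ### Cardinality helpers -/

theorem nat_card_sigma {ι : Type} [Fintype ι] (β : ι → Type) [∀ i, Finite (β i)] :
    Nat.card (Σ i, β i) = ∑ i, Nat.card (β i) := by
  letI := fun i => Fintype.ofFinite (β i)
  simp [Nat.card_eq_fintype_card, Fintype.card_sigma]

theorem card_eq_sum_fibers {α ι : Type} [Finite α] [Fintype ι] (p : α → Prop) (κ : α → ι) :
    Nat.card {a : α // p a} = ∑ i : ι, Nat.card {a : α // p a ∧ κ a = i} := by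
  classical
  have e1 : {a : α // p a} ≃ Σ i : ι, {x : {a : α // p a} // κ x.1 = i} :=
    (Equiv.sigmaFiberEquiv (fun x : {a : α // p a} => κ x.1)).symm
  rw [Nat.card_congr e1, nat_card_sigma]
  refine Finset.sum_congr rfl fun i _ => ?_
  exact Nat.card_congr (Equiv.subtypeSubtypeEquivSubtypeInter p (fun a => κ a = i))
/-! ### Setoid / quotient graph lemmas -/

noncomputable instance quotientFintype {n : ℕ} (s : Setoid (Fin n)) : Fintype (Quotient s) :=
  Fintype.ofFinite _

theorem indep_bot {n : ℕ} (H : SimpleGraph (Fin n)) : IndepSetoid H (botSetoid n) := by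
  intro u v huv hadj
  exact H.irrefl (huv ▸ hadj)

theorem eq_bot_of_trivial {n : ℕ} {s : Setoid (Fin n)} (h : ∀ u v, s u v → u = v) :
    s = botSetoid n :=
  Setoid.ext fun a b => ⟨h a b, fun e => e ▸ s.refl a⟩

theorem card_quotient_le {n : ℕ} (s : Setoid (Fin n)) : Fintype.card (Quotient s) ≤ n := by
  have := Fintype.card_le_of_surjective (Quotient.mk s) Quotient.mk_surjective
  simpa using this

theorem card_quotient_lt {n : ℕ} {s : Setoid (Fin n)} (hs : s ≠ botSetoid n) :
    Fintype.card (Quotient s) < n := by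
  have hne : ¬ Function.Injective (Quotient.mk s) := by
    intro hinj
    exact hs (eq_bot_of_trivial fun u v huv => hinj (Quotient.sound huv))
  have := Fintype.card_lt_of_surjective_not_injective (Quotient.mk s)
    Quotient.mk_surjective hne
  simpa using this

/-- `H` is isomorphic to its quotient by the bottom setoid. -/
noncomputable def botIso {n : ℕ} (H : SimpleGraph (Fin n)) :
    H ≃g QuotGraph H (botSetoid n) := by
  have hinj : Function.Injective (Quotient.mk (botSetoid n)) :=
    fun u v h => Quotient.exact h
  refine ⟨Equiv.ofBijective (Quotient.mk (botSetoid n)) ⟨hinj, Quotient.mk_surjective⟩, ?_⟩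
  intro u v
  constructor
  · rintro ⟨hne, u', v', hu, hv, hadj⟩
    have hu' : u' = u := Quotient.exact hu
    have hv' : v' = v := Quotient.exact hv
    exact hu' ▸ hv' ▸ hadj
  · intro hadj
    exact ⟨fun h => hadj.ne (hinj h), u, v, rfl, rfl, hadj⟩

/-! ### The key identity: hom counts as sums of injective counts over quotients -/

open scoped Classical in
theorem fiber_card {n : ℕ} {V : Type} [Fintype V] (H : SimpleGraph (Fin n))
    (G : SimpleGraph V) (s : Setoid (Fin n)) :
    Nat.card {f : H →g G // Setoid.ker ⇑f = s} =
      if IndepSetoid H s then injCount (QuotGraph H s) G else 0 := by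
  split_ifs with hindep
  · -- bijection with injective homs from the quotient graph
    refine (Nat.card_eq_of_bijective
      (fun g : {g : QuotGraph H s →g G // Function.Injective ⇑g} =>
        (⟨⟨fun x => g.1 (Quotient.mk s x), ?_⟩, ?_⟩ : {f : H →g G // Setoid.ker ⇑f = s}))
      ⟨?_, ?_⟩).symm
    · -- hom property
      intro a b hab
      refine g.1.map_rel' ⟨?_, a, b, rfl, rfl, hab⟩
      intro h
      exact hindep a b (Quotient.exact h) hab
    · -- kernel property
      refine Setoid.ext fun a b => ?_
      change g.1 (Quotient.mk s a) = g.1 (Quotient.mk s b) ↔ s a b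
      rw [g.2.eq_iff, Quotient.eq]
    · -- injective
      rintro ⟨g, hg⟩ ⟨g', hg'⟩ h
      have h' := congrArg (fun x => (x.1 : Fin n → V)) h
      refine Subtype.ext (DFunLike.ext _ _ ?_)
      refine Quotient.ind fun a => ?_
      exact congrFun h' a
    · -- surjective
      rintro ⟨f, hf⟩
      have hsound : ∀ a b : Fin n, s a b → f a = f b := by
        intro a b hab
        rw [← hf] at hab
        exact hab
      refine ⟨⟨⟨Quotient.lift ⇑f hsound, ?_⟩, ?_⟩, ?_⟩
      · rintro x y ⟨hne, u, v, hu, hv, hadj⟩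
        subst hu; subst hv
        exact f.map_rel' hadj
      · refine Quotient.ind fun a => Quotient.ind fun b => ?_
        intro h
        have h2 : (Setoid.ker ⇑f) a b := h
        rw [hf] at h2
        exact Quotient.sound h2
      · refine Subtype.ext (DFunLike.ext _ _ fun a => rfl)
  · -- empty
    rw [Nat.card_eq_zero]
    left
    constructor
    rintro ⟨f, hf⟩
    rw [IndepSetoid] at hindep
    push_neg at hindep
    obtain ⟨u, v, huv, hadj⟩ := hindep
    rw [← hf] at huv
    have h2 : G.Adj (f u) (f v) := f.map_rel' hadj
    have h3 : f u = f v := huv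
    rw [h3] at h2
    exact G.irrefl h2

open scoped Classical in
theorem key_identity {n : ℕ} {V : Type} [Fintype V] (H : SimpleGraph (Fin n))
    (G : SimpleGraph V) :
    homCount H G =
      ∑ s : Setoid (Fin n), if IndepSetoid H s then injCount (QuotGraph H s) G else 0 := by
  have h0 : homCount H G = Nat.card {f : H →g G // True} :=
    Nat.card_congr (Equiv.subtypeUnivEquiv fun _ => trivial).symm
  rw [h0, card_eq_sum_fibers (fun _ => True) (fun f : H →g G => Setoid.ker ⇑f)]
  refine Finset.sum_congr rfl fun s _ => ?_
  rw [← fiber_card H G s]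
  exact Nat.card_congr (Equiv.subtypeEquivRight fun f => by simp)
/-! ### Expressibility by hom counts -/

def CFun : Type 1 := (V : Type) → [Fintype V] → SimpleGraph V → ℚ

def Represents (a : (Σ n, GraphClass n) → ℚ) (F : CFun) : Prop :=
  (Function.support a).Finite ∧
  ∀ (V : Type) [Fintype V], ∀ G : SimpleGraph V,
    F V G = ∑ᶠ c : Σ n, GraphClass n, a c * (classHomCount c.2 G : ℚ)

def Expressible (F : CFun) : Prop := ∃ a, Represents a F

theorem support_term_finite {a : (Σ n, GraphClass n) → ℚ} (ha : (Function.support a).Finite)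
    {V : Type} [Fintype V] (G : SimpleGraph V) :
    (Function.support fun c => a c * (classHomCount c.2 G : ℚ)).Finite :=
  ha.subset (Function.support_mul_subset_left _ _)

theorem expr_congr {F F' : CFun} (h : ∀ (V : Type) [Fintype V] (G : SimpleGraph V),
    F V G = F' V G) (hF' : Expressible F') : Expressible F := by
  obtain ⟨a, ha, hrep⟩ := hF'
  exact ⟨a, ha, fun V _ G => (h V G).trans (hrep V G)⟩

theorem expr_zero : Expressible (fun _ _ _ => (0 : ℚ)) := by
  refine ⟨0, by simp, fun V _ G => ?_⟩
  simp

theorem expr_add {F F' : CFun} (h : Expressible F) (h' : Expressible F') :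
    Expressible (fun V _ G => F V G + F' V G) := by
  obtain ⟨a, ha, hrep⟩ := h
  obtain ⟨a', ha', hrep'⟩ := h'
  refine ⟨a + a', (ha.union ha').subset (Function.support_add _ _), fun V _ G => ?_⟩
  show F V G + F' V G = _
  rw [hrep V G, hrep' V G, ← finsum_add_distrib (support_term_finite ha G)
    (support_term_finite ha' G)]
  refine finsum_congr fun c => ?_
  simp [add_mul]

theorem expr_smul (q : ℚ) {F : CFun} (h : Expressible F) :
    Expressible (fun V _ G => q * F V G) := by
  obtain ⟨a, ha, hrep⟩ := h
  have hsupp : (Function.support fun c => q * a c).Finite := by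
    refine ha.subset ?_
    intro c hc
    simp only [Function.mem_support] at hc ⊢
    intro h0
    exact hc (by rw [h0, mul_zero])
  refine ⟨fun c => q * a c, hsupp, fun V _ G => ?_⟩
  show q * F V G = _
  rw [hrep V G, mul_finsum _ _]
  refine finsum_congr fun c => ?_
  ring

theorem expr_sub {F F' : CFun} (h : Expressible F) (h' : Expressible F') :
    Expressible (fun V _ G => F V G - F' V G) := by
  have := expr_add h (expr_smul (-1) h')
  refine expr_congr (fun V _ G => ?_) this
  ring

theorem expr_sum {ι : Type} (s : Finset ι) (F : ι → CFun)
    (h : ∀ i ∈ s, Expressible (F i)) :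
    Expressible (fun V _ G => ∑ i ∈ s, F i V G) := by
  classical
  induction s using Finset.induction_on with
  | empty => exact expr_congr (fun V _ G => by simp) expr_zero
  | @insert i s hi IH =>
    have h1 : Expressible (F i) := h i (Finset.mem_insert_self i s)
    have h2 := IH fun j hj => h j (Finset.mem_insert_of_mem hj)
    refine expr_congr (fun V _ G => ?_) (expr_add h1 h2)
    rw [Finset.sum_insert hi]

theorem expr_homCount (n : ℕ) (H : SimpleGraph (Fin n)) :
    Expressible (fun V _ G => (homCount H G : ℚ)) := by
  classical
  refine ⟨fun c => if c = ⟨n, ⟦H⟧⟩ then 1 else 0, ?_, fun V _ G => ?_⟩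
  · refine (Set.finite_singleton (⟨n, ⟦H⟧⟩ : Σ n, GraphClass n)).subset ?_
    intro c hc
    by_cases h : c = ⟨n, ⟦H⟧⟩
    · simp [h]
    · simp [h] at hc
  · rw [finsum_eq_single _ (⟨n, ⟦H⟧⟩ : Σ n, GraphClass n) (fun x hx => by simp [hx])]
    simp [classHomCount_mk]

open scoped Classical in
theorem expr_inj : ∀ (n : ℕ) (H : SimpleGraph (Fin n)),
    Expressible (fun V _ G => (injCount H G : ℚ)) := by
  intro n
  induction n using Nat.strong_induction_on with
  | _ n IH =>
    intro H
    have key : ∀ (V : Type) [Fintype V] (G : SimpleGraph V),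
        (injCount H G : ℚ) = (homCount H G : ℚ) -
          ∑ s ∈ Finset.univ.erase (botSetoid n),
            (if IndepSetoid H s then
              (injCount ((QuotGraph H s).comap ⇑(Fintype.equivFin (Quotient s)).symm) G : ℚ)
            else 0) := by
      intro V _ G
      have hk := key_identity H G
      have hq : (homCount H G : ℚ) = ∑ s : Setoid (Fin n),
          (if IndepSetoid H s then (injCount (QuotGraph H s) G : ℚ) else 0) := by
        rw [hk]
        push_cast [apply_ite (fun m : ℕ => (m : ℚ))]
        rfl
      have hsplit : (∑ s ∈ Finset.univ.erase (botSetoid n),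
            (if IndepSetoid H s then (injCount (QuotGraph H s) G : ℚ) else 0)) +
          (if IndepSetoid H (botSetoid n) then (injCount (QuotGraph H (botSetoid n)) G : ℚ)
            else 0) = ∑ s : Setoid (Fin n),
            (if IndepSetoid H s then (injCount (QuotGraph H s) G : ℚ) else 0) :=
        Finset.sum_erase_add _ _ (Finset.mem_univ _)
      rw [← hsplit, if_pos (indep_bot H), ← injCount_iso_left (botIso H) G] at hq
      have hcongr : (∑ s ∈ Finset.univ.erase (botSetoid n),
            (if IndepSetoid H s then (injCount (QuotGraph H s) G : ℚ) else 0)) =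
          ∑ s ∈ Finset.univ.erase (botSetoid n),
            (if IndepSetoid H s then
              (injCount ((QuotGraph H s).comap ⇑(Fintype.equivFin (Quotient s)).symm) G : ℚ)
            else 0) := by
        refine Finset.sum_congr rfl fun s _ => ?_
        by_cases h : IndepSetoid H s
        · simp only [if_pos h]
          rw [injCount_iso_left (comapIso (Fintype.equivFin (Quotient s)).symm (QuotGraph H s)) G]
        · simp [h]
      rw [hcongr] at hq
      rw [hq]
      ring
    refine expr_congr key (expr_sub (expr_homCount n H) (expr_sum _ _ fun s hs => ?_))
    by_cases hind : IndepSetoid H s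
    · simp only [if_pos hind]
      exact IH _ (card_quotient_lt (Finset.ne_of_mem_erase hs)) _
    · simp only [if_neg hind]
      exact expr_zero
/-! ### Injective homs as sums of induced-subgraph embedding counts -/

open scoped Classical in
theorem inj_eq_sum_indInj {k : ℕ} {V : Type} [Fintype V] (H : SimpleGraph (Fin k))
    (G : SimpleGraph V) :
    injCount H G = ∑ H' : SimpleGraph (Fin k),
      if H ≤ H' then indInjCount H' G else 0 := by
  have e1 : {g : H →g G // Function.Injective ⇑g} ≃ {f : Fin k ↪ V // H ≤ G.comap ⇑f} := by
    refine ⟨fun g => ⟨⟨⇑g.1, g.2⟩, fun a b hab => g.1.map_rel' hab⟩,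
      fun f => ⟨⟨⇑f.1, fun hab => f.2 hab⟩, f.1.injective⟩, ?_, ?_⟩
    · intro g; ext v; rfl
    · intro f; ext v; rfl
  rw [injCount, Nat.card_congr e1,
    card_eq_sum_fibers (fun f : Fin k ↪ V => H ≤ G.comap ⇑f) (fun f => G.comap ⇑f)]
  refine Finset.sum_congr rfl fun H' _ => ?_
  by_cases hle : H ≤ H'
  · rw [if_pos hle]
    exact Nat.card_congr (Equiv.subtypeEquivRight fun f =>
      ⟨fun h => h.2, fun h => ⟨h ▸ hle, h⟩⟩)
  · rw [if_neg hle, Nat.card_eq_zero]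
    left
    constructor
    rintro ⟨f, h1, h2⟩
    exact hle (h2 ▸ h1)

/-- Number of non-edges, used as termination measure. -/
noncomputable def missCard {k : ℕ} (H : SimpleGraph (Fin k)) : ℕ := (H.edgeSetᶜ).ncard

theorem missCard_lt {k : ℕ} {H H' : SimpleGraph (Fin k)} (h : H < H') :
    missCard H' < missCard H := by
  have h1 : H.edgeSet ⊂ H'.edgeSet := SimpleGraph.edgeSet_ssubset_edgeSet.2 h
  have h2 : H'.edgeSetᶜ ⊂ H.edgeSetᶜ := by
    rw [Set.ssubset_def] at h1 ⊢
    exact ⟨Set.compl_subset_compl.2 h1.1, fun hc => h1.2 (by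
      have := Set.compl_subset_compl.2 hc
      simpa using this)⟩
  exact Set.ncard_lt_ncard h2 (Set.toFinite _)

open scoped Classical in
theorem expr_indInj {k : ℕ} : ∀ (H : SimpleGraph (Fin k)),
    Expressible (fun V _ G => (indInjCount H G : ℚ)) := by
  intro H
  generalize hm : missCard H = m
  induction m using Nat.strong_induction_on generalizing H with
  | _ m IH =>
  have key : ∀ (V : Type) [Fintype V] (G : SimpleGraph V),
      (indInjCount H G : ℚ) = (injCount H G : ℚ) -
        ∑ H' ∈ Finset.univ.erase H,
          (if H ≤ H' then (indInjCount H' G : ℚ) else 0) := by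
    intro V _ G
    have hk := inj_eq_sum_indInj H G
    have hq : (injCount H G : ℚ) = ∑ H' : SimpleGraph (Fin k),
        (if H ≤ H' then (indInjCount H' G : ℚ) else 0) := by
      rw [hk]
      push_cast [apply_ite (fun m : ℕ => (m : ℚ))]
      rfl
    have hsplit : (∑ H' ∈ Finset.univ.erase H,
          (if H ≤ H' then (indInjCount H' G : ℚ) else 0)) +
        (if H ≤ H then (indInjCount H G : ℚ) else 0) =
        ∑ H' : SimpleGraph (Fin k), (if H ≤ H' then (indInjCount H' G : ℚ) else 0) :=
      Finset.sum_erase_add _ _ (Finset.mem_univ _)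
    rw [← hsplit, if_pos le_rfl] at hq
    rw [hq]
    ring
  refine expr_congr key (expr_sub (expr_inj k H) (expr_sum _ _ fun H' hH' => ?_))
  by_cases hle : H ≤ H'
  · simp only [if_pos hle]
    have hlt : H < H' := lt_of_le_of_ne hle (Ne.symm (Finset.ne_of_mem_erase hH'))
    exact IH (missCard H') (hm ▸ missCard_lt hlt) H' rfl
  · simp only [if_neg hle]
    exact expr_zero

/-! ### Counting embeddings with a property -/

open scoped Classical in
theorem phiInj_eq_sum (Φ : GraphProperty) (k : ℕ) {V : Type} [Fintype V] (G : SimpleGraph V) :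
    Nat.card {f : Fin k ↪ V // Φ k (G.comap ⇑f)} =
      ∑ H : SimpleGraph (Fin k), if Φ k H then indInjCount H G else 0 := by
  rw [card_eq_sum_fibers (fun f : Fin k ↪ V => Φ k (G.comap ⇑f)) (fun f => G.comap ⇑f)]
  refine Finset.sum_congr rfl fun H _ => ?_
  by_cases hΦH : Φ k H
  · rw [if_pos hΦH]
    exact Nat.card_congr (Equiv.subtypeEquivRight fun f =>
      ⟨fun h => h.2, fun h => ⟨h ▸ hΦH, h⟩⟩)
  · rw [if_neg hΦH, Nat.card_eq_zero]
    left
    constructor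
    rintro ⟨f, h1, h2⟩
    exact hΦH (h2 ▸ h1)

def imageFinset {k : ℕ} {V : Type} [Fintype V] (f : Fin k ↪ V) : Finset V :=
  Finset.univ.map f

theorem mem_imageFinset {k : ℕ} {V : Type} [Fintype V] (f : Fin k ↪ V) (i : Fin k) :
    f i ∈ ((imageFinset f : Finset V) : Set V) := by
  simp [imageFinset]

theorem imageFinset_card {k : ℕ} {V : Type} [Fintype V] (f : Fin k ↪ V) :
    (imageFinset f).card = k := by
  simp [imageFinset]

/-- The equivalence of `Fin k` with the image of an embedding. -/
noncomputable def imgEquiv {k : ℕ} {V : Type} [Fintype V] (f : Fin k ↪ V) :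
    Fin k ≃ ((imageFinset f : Finset V) : Set V) := by
  refine Equiv.ofBijective (fun i => ⟨f i, mem_imageFinset f i⟩) ⟨?_, ?_⟩
  · intro i j h
    exact f.injective (congrArg Subtype.val h)
  · rintro ⟨x, hx⟩
    simp only [imageFinset, Finset.coe_map, Set.mem_image, Finset.coe_univ, Set.mem_univ,
      true_and] at hx
    obtain ⟨i, hi⟩ := hx
    exact ⟨i, Subtype.ext hi⟩

theorem comap_imgEquiv {k : ℕ} {V : Type} [Fintype V] (f : Fin k ↪ V) (G : SimpleGraph V) :
    (G.induce ((imageFinset f : Finset V) : Set V)).comap ⇑(imgEquiv f) = G.comap ⇑f := by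
  ext i j
  exact Iff.rfl

theorem phi_all_or_none {Φ : GraphProperty} (hΦ : Invariant Φ) (k : ℕ) {V : Type} [Fintype V]
    {G : SimpleGraph V} {S : Finset V} (e e' : Fin k ≃ (S : Set V)) :
    Φ k ((G.induce (S : Set V)).comap ⇑e) ↔ Φ k ((G.induce (S : Set V)).comap ⇑e') := by
  refine hΦ k _ _ ⟨⟨e.trans e'.symm, ?_⟩⟩
  intro i j
  show (G.induce (S : Set V)).Adj (e' (e'.symm (e i))) (e' (e'.symm (e j))) ↔ _
  rw [Equiv.apply_symm_apply, Equiv.apply_symm_apply]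
  exact Iff.rfl

def equivToEmb {k : ℕ} {V : Type} [Fintype V] (S : Finset V) (e : Fin k ≃ (S : Set V)) :
    Fin k ↪ V :=
  ⟨fun i => (e i).1, fun i j h => e.injective (Subtype.ext h)⟩

theorem image_equivToEmb {k : ℕ} {V : Type} [Fintype V] (S : Finset V)
    (e : Fin k ≃ (S : Set V)) : imageFinset (equivToEmb S e) = S := by
  ext x
  simp only [imageFinset, Finset.mem_map, Finset.mem_univ, true_and, equivToEmb,
    Function.Embedding.coeFn_mk]
  constructor
  · rintro ⟨i, rfl⟩
    exact (e i).2
  · intro hx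
    obtain ⟨i, hi⟩ := e.surjective ⟨x, hx⟩
    exact ⟨i, congrArg Subtype.val hi⟩

theorem card_fiber_image {k : ℕ} {V : Type} [Fintype V] (S : Finset V) (hS : S.card = k) :
    Nat.card {f : Fin k ↪ V // imageFinset f = S} = k.factorial := by
  classical
  have hcard : Fintype.card ((S : Set V)) = k := by
    rw [← Nat.card_eq_fintype_card, Nat.card_coe_set_eq, Set.ncard_coe_finset, hS]
  have hbij : Function.Bijective
      (fun e : Fin k ≃ (S : Set V) =>
        (⟨equivToEmb S e, image_equivToEmb S e⟩ : {f : Fin k ↪ V // imageFinset f = S})) := by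
    constructor
    · intro e e' h
      ext i
      exact congrArg (fun g : {f : Fin k ↪ V // imageFinset f = S} => (g.1 : Fin k → V) i) h
    · rintro ⟨f, hf⟩
      have hmem : ∀ i, f i ∈ (S : Set V) := fun i => by
        rw [← hf]; exact mem_imageFinset f i
      have hbij2 : Function.Bijective (fun i => (⟨f i, hmem i⟩ : (S : Set V))) := by
        constructor
        · intro i j h
          exact f.injective (congrArg Subtype.val h)
        · rintro ⟨x, hx⟩
          rw [← hf] at hx
          simp only [imageFinset, Finset.coe_map, Set.mem_image, Finset.coe_univ, Set.mem_univ,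
            true_and] at hx
          obtain ⟨i, hi⟩ := hx
          exact ⟨i, Subtype.ext hi⟩
      refine ⟨Equiv.ofBijective _ hbij2, ?_⟩
      refine Subtype.ext ?_
      ext i
      rfl
  rw [(Nat.card_eq_of_bijective _ hbij).symm, Nat.card_eq_fintype_card,
    Fintype.card_equiv (Fintype.equivOfCardEq (by rw [hcard, Fintype.card_fin])),
    Fintype.card_fin]

theorem phiInj_eq_indSub {Φ : GraphProperty} (hΦ : Invariant Φ) (k : ℕ) {V : Type} [Fintype V]
    (G : SimpleGraph V) :
    Nat.card {f : Fin k ↪ V // Φ k (G.comap ⇑f)} = indSub Φ k G * k.factorial := by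
  classical
  set Sub := {S : Finset V // S.card = k ∧
    ∃ e : Fin k ≃ (S : Set V), Φ k ((G.induce (S : Set V)).comap e)} with hSub
  haveI : Finite Sub := by
    apply Subtype.finite
  haveI : Fintype Sub := Fintype.ofFinite _
  let κ : {f : Fin k ↪ V // Φ k (G.comap ⇑f)} → Sub := fun x =>
    ⟨imageFinset x.1, imageFinset_card x.1,
      ⟨imgEquiv x.1, (comap_imgEquiv x.1 G).symm ▸ x.2⟩⟩
  have e1 : {f : Fin k ↪ V // Φ k (G.comap ⇑f)} ≃ Σ S : Sub,
      {x : {f : Fin k ↪ V // Φ k (G.comap ⇑f)} // κ x = S} :=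
    (Equiv.sigmaFiberEquiv κ).symm
  rw [Nat.card_congr e1, nat_card_sigma]
  have hfib : ∀ S : Sub, Nat.card {x : {f : Fin k ↪ V // Φ k (G.comap ⇑f)} // κ x = S}
      = k.factorial := by
    rintro ⟨S, hScard, hSe⟩
    have e2 : {x : {f : Fin k ↪ V // Φ k (G.comap ⇑f)} // κ x = ⟨S, hScard, hSe⟩} ≃
        {f : Fin k ↪ V // Φ k (G.comap ⇑f) ∧ imageFinset f = S} := by
      refine (Equiv.subtypeEquivRight fun x => ?_).trans
        (Equiv.subtypeSubtypeEquivSubtypeInter _ (fun f => imageFinset f = S))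
      constructor
      · intro h
        exact congrArg Subtype.val h
      · intro h
        exact Subtype.ext h
    have e3 : {f : Fin k ↪ V // Φ k (G.comap ⇑f) ∧ imageFinset f = S} ≃
        {f : Fin k ↪ V // imageFinset f = S} := by
      refine Equiv.subtypeEquivRight fun f => ?_
      constructor
      · intro h; exact h.2
      · intro h
        refine ⟨?_, h⟩
        subst h
        rw [← comap_imgEquiv f G]
        obtain ⟨e0, he0⟩ := hSe
        exact (phi_all_or_none hΦ k (imgEquiv f) e0).2 he0
    rw [Nat.card_congr e2, Nat.card_congr e3]
    exact card_fiber_image S hScard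
  rw [Finset.sum_congr rfl fun S _ => hfib S, Finset.sum_const, smul_eq_mul,
    Finset.card_univ, ← Nat.card_eq_fintype_card]
  rfl
/-! ### Existence -/

open scoped Classical in
theorem expr_indSub (Φ : GraphProperty) (hΦ : Invariant Φ) (k : ℕ) :
    Expressible (fun V _ G => (indSub Φ k G : ℚ)) := by
  have hk0 : (k.factorial : ℚ) ≠ 0 := Nat.cast_ne_zero.2 (Nat.factorial_ne_zero k)
  have key : ∀ (V : Type) [Fintype V] (G : SimpleGraph V),
      (indSub Φ k G : ℚ) = (k.factorial : ℚ)⁻¹ *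
        ∑ H : SimpleGraph (Fin k), (if Φ k H then (indInjCount H G : ℚ) else 0) := by
    intro V _ G
    have h1 := phiInj_eq_sum Φ k G
    have h2 := phiInj_eq_indSub hΦ k G
    have h3 : (indSub Φ k G : ℚ) * (k.factorial : ℚ) =
        ∑ H : SimpleGraph (Fin k), (if Φ k H then (indInjCount H G : ℚ) else 0) := by
      rw [← Nat.cast_mul, ← h2, h1]
      push_cast [apply_ite (fun m : ℕ => (m : ℚ))]
      rfl
    rw [← h3]
    field_simp
  refine expr_congr key (expr_smul _ (expr_sum Finset.univ _ fun H _ => ?_))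
  by_cases h : Φ k H
  · simp only [if_pos h]
    exact expr_indInj H
  · simp only [if_neg h]
    exact expr_zero

/-! ### Uniqueness: linear independence of injective counts -/

theorem injCount_self_pos {n : ℕ} (H : SimpleGraph (Fin n)) : 0 < injCount H H := by
  have : Nonempty {f : H →g H // Function.Injective ⇑f} := ⟨⟨Hom.id, fun a b h => h⟩⟩
  exact Nat.card_pos

/-- Antisymmetry: injective homs in both directions give the same iso class. -/
theorem class_eq_of_inj_both {n m : ℕ} {A : SimpleGraph (Fin n)} {B : SimpleGraph (Fin m)}
    (f : A →g B) (hf : Function.Injective ⇑f) (g : B →g A) (hg : Function.Injective ⇑g) :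
    (⟨n, ⟦A⟧⟩ : Σ n, GraphClass n) = ⟨m, ⟦B⟧⟩ := by
  have hnm : n = m := by
    have h1 := Fintype.card_le_of_injective _ hf
    have h2 := Fintype.card_le_of_injective _ hg
    simp only [Fintype.card_fin] at h1 h2
    omega
  subst hnm
  have hfbij : Function.Bijective ⇑f :=
    (Fintype.bijective_iff_injective_and_card ⇑f).2 ⟨hf, rfl⟩
  set h := g.comp f with hh
  have hhbij : Function.Bijective ⇑h := by
    refine (Fintype.bijective_iff_injective_and_card ⇑h).2 ⟨?_, rfl⟩
    exact fun a b hab => hf (hg hab)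
  set π : Equiv.Perm (Fin n) := Equiv.ofBijective ⇑h hhbij with hπ
  have hiter : ∀ (j : ℕ) (u v : Fin n), A.Adj u v → A.Adj ((⇑h)^[j] u) ((⇑h)^[j] v) := by
    intro j
    induction j with
    | zero => intro u v huv; exact huv
    | succ j IH =>
      intro u v huv
      rw [Function.iterate_succ_apply, Function.iterate_succ_apply]
      exact IH _ _ (h.map_rel' huv)
  have hN : 0 < orderOf π := orderOf_pos π
  have hπN : ⇑(π ^ orderOf π) = id := by rw [pow_orderOf_eq_one]; rfl
  have hπiter : ∀ j : ℕ, ⇑(π ^ j) = (⇑h)^[j] := by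
    intro j
    induction j with
    | zero => rfl
    | succ j IH =>
      funext x
      rw [pow_succ']
      simp only [Equiv.Perm.coe_mul, Function.comp_apply, IH]
      rw [Function.iterate_succ_apply']
      rfl
  have hrefl : ∀ u v : Fin n, B.Adj (f u) (f v) → A.Adj u v := by
    intro u v huv
    have h1 : A.Adj (⇑h u) (⇑h v) := g.map_rel' huv
    have h2 : A.Adj ((⇑h)^[orderOf π - 1] (⇑h u)) ((⇑h)^[orderOf π - 1] (⇑h v)) :=
      hiter _ _ _ h1
    rw [← Function.iterate_succ_apply, ← Function.iterate_succ_apply] at h2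
    have h3 : (orderOf π - 1).succ = orderOf π := by omega
    rw [h3, ← hπiter, hπN] at h2
    exact h2
  have hiso : A ≃g B := ⟨Equiv.ofBijective ⇑f hfbij, by
    intro u v
    exact ⟨hrefl u v, fun huv => f.map_rel' huv⟩⟩
  exact congrArg (fun q => (⟨n, q⟩ : Σ n, GraphClass n)) (Quotient.sound ⟨hiso⟩)

/-- The injectivity preorder on classes. -/
def InjLe (c d : Σ n, GraphClass n) : Prop :=
  ∃ f : c.2.out →g d.2.out, Function.Injective ⇑f

theorem injLe_refl (c : Σ n, GraphClass n) : InjLe c c := ⟨Hom.id, fun a b h => h⟩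

theorem injLe_trans {c d e : Σ n, GraphClass n} (h1 : InjLe c d) (h2 : InjLe d e) :
    InjLe c e := by
  obtain ⟨f, hf⟩ := h1
  obtain ⟨g, hg⟩ := h2
  exact ⟨g.comp f, fun a b hab => hf (hg hab)⟩

theorem eq_of_injLe_both {c d : Σ n, GraphClass n} (h1 : InjLe c d) (h2 : InjLe d c) :
    c = d := by
  obtain ⟨f, hf⟩ := h1
  obtain ⟨g, hg⟩ := h2
  have := class_eq_of_inj_both f hf g hg
  have hc : (⟨c.1, ⟦c.2.out⟧⟩ : Σ n, GraphClass n) = c := by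
    rw [Quotient.out_eq]
  have hd : (⟨d.1, ⟦d.2.out⟧⟩ : Σ n, GraphClass n) = d := by
    rw [Quotient.out_eq]
  rw [hc, hd] at this
  exact this

theorem inj_indep (T : Finset (Σ n, GraphClass n)) :
    ∀ β : (Σ n, GraphClass n) → ℚ,
      (∀ (n : ℕ) (G : SimpleGraph (Fin n)), ∑ c ∈ T, β c * (classInjCount c G : ℚ) = 0) →
      ∀ c ∈ T, β c = 0 := by
  classical
  induction T using Finset.strongInduction with
  | _ T IH =>
  intro β hβ c hc
  letI pre : Preorder (Σ n, GraphClass n) :=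
    { le := InjLe
      le_refl := injLe_refl
      le_trans := fun _ _ _ => injLe_trans
      lt := fun a b => InjLe a b ∧ ¬ InjLe b a
      lt_iff_le_not_ge := fun _ _ => Iff.rfl }
  haveI : @IsTrans (Σ n, GraphClass n) (fun a b => @LE.le _ pre.toLE b a) :=
    ⟨fun _ _ _ h1 h2 => injLe_trans h2 h1⟩
  obtain ⟨c₀, hc₀T, hmin⟩ := @Finset.exists_minimal _ pre.toLE _ T ⟨c, hc⟩
  -- all other terms vanish when evaluated at `c₀`'s representative
  have hvanish : ∀ b ∈ T, b ≠ c₀ → β b * (classInjCount b (c₀.2.out) : ℚ) = 0 := by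
    intro b hb hbne
    have : classInjCount b (c₀.2.out) = 0 := by
      by_contra hne
      have hfin : Finite {f : b.2.out →g c₀.2.out // Function.Injective ⇑f} := by
        exact Subtype.finite
      have hnonempty : Nonempty {f : b.2.out →g c₀.2.out // Function.Injective ⇑f} := by
        rcases Nat.card_ne_zero.1 hne with ⟨h1, _⟩
        exact h1
      obtain ⟨f, hf⟩ := hnonempty
      have hble : InjLe b c₀ := ⟨f, hf⟩
      have hlt : ¬ (@LT.lt _ pre.toLT b c₀) := fun hbc => hbc.2 (hmin hb hbc.1)
      have : InjLe c₀ b := by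
        by_contra hcb
        exact hlt (lt_of_le_not_ge hble hcb)
      exact hbne (eq_of_injLe_both hble this)
    rw [this]
    simp
  have hsum := hβ c₀.1 (c₀.2.out)
  rw [Finset.sum_eq_single_of_mem c₀ hc₀T hvanish] at hsum
  have hpos : (0 : ℚ) < (classInjCount c₀ (c₀.2.out) : ℚ) := by
    exact_mod_cast injCount_self_pos c₀.2.out
  have hβc₀ : β c₀ = 0 := by
    rcases mul_eq_zero.1 hsum with h | h
    · exact h
    · exact absurd h (ne_of_gt hpos)
  by_cases hcc : c = c₀
  · rw [hcc]; exact hβc₀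
  · refine IH (T.erase c₀) (Finset.erase_ssubset hc₀T) β ?_ c (Finset.mem_erase.2 ⟨hcc, hc⟩)
    intro n G
    have := hβ n G
    rw [← Finset.sum_erase_add _ _ hc₀T, hβc₀] at this
    simpa using this
/-! ### The hom-to-inj conversion matrix -/

/-- Number of independent setoids on (a representative of) `c` whose quotient lies in class `d`. -/
noncomputable def Ncd (c d : Σ n, GraphClass n) : ℕ :=
  Nat.card {s : Setoid (Fin c.1) //
    IndepSetoid c.2.out s ∧ toClass (QuotGraph c.2.out s) = d}

/-- All classes of level at most `N`. -/
noncomputable def levelSet (N : ℕ) : Finset (Σ n, GraphClass n) :=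
  (Finset.range (N + 1)).sigma fun _ => Finset.univ

theorem mem_levelSet {N : ℕ} {c : Σ n, GraphClass n} : c ∈ levelSet N ↔ c.1 ≤ N := by
  cases c
  simp [levelSet, Nat.lt_succ_iff]

theorem toClass_fst {W : Type} [Fintype W] (K : SimpleGraph W) :
    (toClass K).1 = Fintype.card W := rfl

theorem toClass_quot_self {n : ℕ} (H : SimpleGraph (Fin n)) :
    toClass (QuotGraph H (botSetoid n)) = ⟨n, ⟦H⟧⟩ := by
  rw [toClass_eq_of_iso (botIso H).symm, toClass_fin]

open scoped Classical in
theorem hom_expand (c : Σ n, GraphClass n) {V : Type} [Fintype V] (G : SimpleGraph V)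
    (N : ℕ) (hc : c.1 ≤ N) :
    (classHomCount c.2 G : ℚ) = ∑ d ∈ levelSet N, (Ncd c d : ℚ) * (classInjCount d G : ℚ) := by
  have hk := key_identity c.2.out G
  have hq : (classHomCount c.2 G : ℚ) = ∑ s : Setoid (Fin c.1),
      (if IndepSetoid c.2.out s then
        (classInjCount (toClass (QuotGraph c.2.out s)) G : ℚ) else 0) := by
    have : classHomCount c.2 G = homCount c.2.out G := rfl
    rw [this, hk]
    push_cast [apply_ite (fun m : ℕ => (m : ℚ))]
    refine Finset.sum_congr rfl fun s _ => ?_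
    by_cases h : IndepSetoid c.2.out s
    · simp only [if_pos h]
      rw [classInjCount_toClass]
    · simp [h]
  rw [hq]
  have hmaps : ∀ s : Setoid (Fin c.1), s ∈ Finset.univ →
      toClass (QuotGraph c.2.out s) ∈ levelSet N := by
    intro s _
    rw [mem_levelSet, toClass_fst]
    exact le_trans (card_quotient_le s) hc
  rw [← Finset.sum_fiberwise_of_maps_to hmaps]
  refine Finset.sum_congr rfl fun d hd => ?_
  have hinner : ∀ s ∈ Finset.univ.filter
      (fun s : Setoid (Fin c.1) => toClass (QuotGraph c.2.out s) = d),
      (if IndepSetoid c.2.out s then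
        (classInjCount (toClass (QuotGraph c.2.out s)) G : ℚ) else 0) =
      (if IndepSetoid c.2.out s then (classInjCount d G : ℚ) else 0) := by
    intro s hs
    rw [(Finset.mem_filter.1 hs).2]
  rw [Finset.sum_congr rfl hinner, ← Finset.sum_filter, Finset.filter_filter,
    Finset.sum_const, nsmul_eq_mul]
  congr 2
  rw [Ncd, Nat.card_eq_fintype_card, Fintype.card_subtype]
  congr 1
  exact Finset.filter_congr fun x _ => by rw [and_comm]

/-! triangularity -/

theorem Ncd_eq_zero_of_lt {c d : Σ n, GraphClass n} (h : c.1 < d.1) : Ncd c d = 0 := by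
  rw [Ncd, Nat.card_eq_zero]
  left
  constructor
  rintro ⟨s, _, hs⟩
  have : d.1 = Fintype.card (Quotient s) := by rw [← hs, toClass_fst]
  have h2 := card_quotient_le s
  omega

open scoped Classical in
theorem Ncd_same_level {c d : Σ n, GraphClass n} (h : d.1 = c.1) :
    Ncd c d = if d = c then 1 else 0 := by
  have hbotclass : toClass (QuotGraph c.2.out (botSetoid c.1)) = c := by
    rw [toClass_quot_self, Quotient.out_eq]
  have hforce : ∀ s : Setoid (Fin c.1),
      IndepSetoid c.2.out s ∧ toClass (QuotGraph c.2.out s) = d → s = botSetoid c.1 := by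
    rintro s ⟨_, hs⟩
    by_contra hsne
    have h1 := card_quotient_lt hsne
    have : d.1 = Fintype.card (Quotient s) := by rw [← hs, toClass_fst]
    omega
  split_ifs with hdc
  · subst hdc
    rw [Ncd, Nat.card_eq_one_iff_unique]
    constructor
    · constructor
      rintro ⟨s, hs⟩ ⟨s', hs'⟩
      exact Subtype.ext ((hforce s hs).trans (hforce s' hs').symm)
    · exact ⟨⟨botSetoid _, indep_bot _, hbotclass⟩⟩
  · rw [Ncd, Nat.card_eq_zero]
    left
    constructor
    rintro ⟨s, hind, hs⟩
    have := hforce s ⟨hind, hs⟩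
    subst this
    exact hdc (hs.symm.trans hbotclass)

theorem Ncd_self (c : Σ n, GraphClass n) : Ncd c c = 1 := by
  rw [Ncd_same_level rfl]
  simp

/-! ### Linear independence of hom counts, and the main theorem -/

theorem hom_indep (b : (Σ n, GraphClass n) → ℚ) (hb : (Function.support b).Finite)
    (h : ∀ (V : Type) [Fintype V] (G : SimpleGraph V),
      ∑ᶠ c : Σ n, GraphClass n, b c * (classHomCount c.2 G : ℚ) = 0) :
    b = 0 := by
  classical
  set N := hb.toFinset.sup Sigma.fst with hN
  have hsupp : Function.support b ⊆ ↑(levelSet N) := by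
    intro c hc
    rw [Finset.mem_coe, mem_levelSet]
    exact Finset.le_sup (hb.mem_toFinset.2 hc)
  have hfin : ∀ (V : Type) [Fintype V] (G : SimpleGraph V),
      ∑ c ∈ levelSet N, b c * (classHomCount c.2 G : ℚ) = 0 := by
    intro V _ G
    rw [← finsum_eq_finset_sum_of_support_subset _
      (subset_trans (Function.support_mul_subset_left _ _) hsupp)]
    exact h V G
  have hconv : ∀ (n : ℕ) (G : SimpleGraph (Fin n)),
      ∑ d ∈ levelSet N,
        (∑ c ∈ levelSet N, b c * (Ncd c d : ℚ)) * (classInjCount d G : ℚ) = 0 := by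
    intro n G
    calc ∑ d ∈ levelSet N,
          (∑ c ∈ levelSet N, b c * (Ncd c d : ℚ)) * (classInjCount d G : ℚ)
        = ∑ d ∈ levelSet N, ∑ c ∈ levelSet N,
            b c * ((Ncd c d : ℚ) * (classInjCount d G : ℚ)) := by
          refine Finset.sum_congr rfl fun d _ => ?_
          rw [Finset.sum_mul]
          exact Finset.sum_congr rfl fun c _ => by ring
      _ = ∑ c ∈ levelSet N, ∑ d ∈ levelSet N,
            b c * ((Ncd c d : ℚ) * (classInjCount d G : ℚ)) := Finset.sum_comm
      _ = ∑ c ∈ levelSet N, b c * (classHomCount c.2 G : ℚ) := by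
          refine Finset.sum_congr rfl fun c hc => ?_
          rw [← Finset.mul_sum, ← hom_expand c G N (mem_levelSet.1 hc)]
      _ = 0 := hfin (Fin n) G
  have hγ := inj_indep (levelSet N) (fun d => ∑ c ∈ levelSet N, b c * (Ncd c d : ℚ))
    (fun n G => hconv n G)
  have hzero : ∀ (m : ℕ), ∀ c ∈ levelSet N, N - c.1 = m → b c = 0 := by
    intro m
    induction m using Nat.strong_induction_on with
    | _ m IH =>
    intro c hcT hcm
    have hγc : ∑ c' ∈ levelSet N, b c' * (Ncd c' c : ℚ) = 0 := hγ c hcT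
    have hside : ∀ c' ∈ levelSet N, c' ≠ c → b c' * (Ncd c' c : ℚ) = 0 := by
      intro c' hc' hne
      rcases lt_trichotomy c'.1 c.1 with hlt | heq | hgt
      · rw [Ncd_eq_zero_of_lt hlt]
        simp
      · rw [Ncd_same_level heq.symm, if_neg (fun hh => hne hh.symm)]
        simp
      · have hcle := mem_levelSet.1 hc'
        have hb0 := IH (N - c'.1) (by omega) c' hc' rfl
        rw [hb0]
        ring
    rw [Finset.sum_eq_single_of_mem c hcT hside, Ncd_self] at hγc
    simpa using hγc
  funext c
  by_cases hc : c ∈ levelSet N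
  · exact hzero (N - c.1) c hc rfl
  · by_contra hbc
    exact hc (by exact_mod_cast hsupp hbc)


/-- There is a unique finitely supported function `a` from isomorphism classes of graphs
to `ℚ` such that `#IndSub(Φ,k,G) = Σ_H a(H) · #Hom(H,G)` for every graph `G`. -/
theorem stmt3 (Φ : GraphProperty) (hΦ : Invariant Φ) (k : ℕ) (hk : 0 < k) :
    ∃! a : (Σ n, GraphClass n) → ℚ,
      (Function.support a).Finite ∧
      ∀ (V : Type) [Fintype V], ∀ G : SimpleGraph V,
        (indSub Φ k G : ℚ) = ∑ᶠ c : Σ n, GraphClass n, a c * (classHomCount c.2 G : ℚ) := by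
  obtain ⟨a, ha, hrep⟩ := expr_indSub Φ hΦ k
  refine ⟨a, ⟨ha, fun V _ G => hrep V G⟩, ?_⟩
  rintro a' ⟨ha', hrep'⟩
  have hdiff : ∀ (V : Type) [Fintype V] (G : SimpleGraph V),
      ∑ᶠ c : Σ n, GraphClass n, (a' c - a c) * (classHomCount c.2 G : ℚ) = 0 := by
    intro V _ G
    calc ∑ᶠ c : Σ n, GraphClass n, (a' c - a c) * (classHomCount c.2 G : ℚ)
        = ∑ᶠ c : Σ n, GraphClass n, (a' c * (classHomCount c.2 G : ℚ) -
            a c * (classHomCount c.2 G : ℚ)) := finsum_congr fun c => by ring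
      _ = (∑ᶠ c : Σ n, GraphClass n, a' c * (classHomCount c.2 G : ℚ)) -
            ∑ᶠ c : Σ n, GraphClass n, a c * (classHomCount c.2 G : ℚ) :=
        finsum_sub_distrib (support_term_finite ha' G) (support_term_finite ha G)
      _ = 0 := by rw [← hrep' V G, ← hrep V G, sub_self]
  have hbfin : (Function.support fun c => a' c - a c).Finite := by
    refine (ha'.union ha).subset ?_
    intro c hc
    simp only [Function.mem_support] at hc
    by_contra hcon
    simp only [Set.mem_union, Function.mem_support, not_or, not_not] at hcon
    exact hc (by rw [hcon.1, hcon.2, sub_self])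
  have hb0 := hom_indep (fun c => a' c - a c) hbfin hdiff
  funext c
  have := congrFun hb0 c
  simpa [sub_eq_zero] using this
end

section
/- Let Φ be a graph property, k a positive integer, d = k(k−1)/2, and a the unique finitely supported rational coefficient function with #IndSub(Φ,k,G) = Σ_H a(H)·#Hom(H,G) for all graphs G. Then for every i ∈ {0,…,d}, k! · Σ_{K ∈ H_i} a(K) = h^{Φ,k}_i, where H_i is the set of isomorphism classes of graphs on k vertices with exactly i edges. -/
open SimpleGraph

/-- The number of edges of a graph. -/
noncomputable def edgeCount {V : Type} (G : SimpleGraph V) : ℕ := Nat.card G.edgeSet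

/-- The `i`-th entry of the f-vector of `Φ` and `k`: the number of edge subsets `A` of
size `i` of the complete graph on `k` labeled vertices such that `K_k[A]` satisfies `Φ`
(encoded as graphs `L` on `Fin k` with `i` edges satisfying `Φ`). -/
noncomputable def fVec (Φ : GraphProperty) (k i : ℕ) : ℕ :=
  Nat.card {L : SimpleGraph (Fin k) // edgeCount L = i ∧ Φ k L}

/-- The `ℓ`-th entry of the h-vector of `Φ` and `k`. -/
noncomputable def hVec (Φ : GraphProperty) (k ℓ : ℕ) : ℚ :=
  ∑ i ∈ Finset.range (ℓ + 1),
    (-1 : ℚ) ^ (ℓ - i) * ((k * (k - 1) / 2 - i).choose (ℓ - i) : ℚ) * (fVec Φ k i : ℚ)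

/-! ### Auxiliary development -/

open SimpleGraph Finset
open scoped Classical

noncomputable section

instance finiteGraphClass (n : ℕ) : Finite (GraphClass n) := Quotient.finite _

noncomputable instance fintypeGraphClass (n : ℕ) : Fintype (GraphClass n) :=
  Fintype.ofFinite _

instance finiteHom {n : ℕ} (H : SimpleGraph (Fin n)) {V : Type} [Fintype V]
    (G : SimpleGraph V) : Finite (H →g G) :=
  Finite.of_injective (fun f => (f : Fin n → V)) RelHom.coe_fn_injective

noncomputable instance fintypeHom {n : ℕ} (H : SimpleGraph (Fin n)) {V : Type} [Fintype V]
    (G : SimpleGraph V) : Fintype (H →g G) := Fintype.ofFinite _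

/-- The blow-up of a graph: each vertex replaced by `m` interchangeable copies. -/
def blowup {V : Type} (G : SimpleGraph V) (m : ℕ) : SimpleGraph (V × Fin m) where
  Adj x y := G.Adj x.1 y.1
  symm := ⟨fun _ _ h => G.adj_symm h⟩
  loopless := ⟨fun _ h => G.irrefl h⟩

lemma homCount_blowup {n : ℕ} (H : SimpleGraph (Fin n)) {V : Type} [Fintype V]
    (G : SimpleGraph V) (m : ℕ) :
    homCount H (blowup G m) = homCount H G * m ^ n := by
  classical
  have e : (H →g blowup G m) ≃ (H →g G) × (Fin n → Fin m) :=
    { toFun := fun f => (⟨fun v => (f v).1, fun h => f.map_rel h⟩, fun v => (f v).2)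
      invFun := fun p => ⟨fun v => (p.1 v, p.2 v), fun h => p.1.map_rel h⟩
      left_inv := fun f => rfl
      right_inv := fun p => rfl }
  unfold homCount
  rw [Nat.card_congr e, Nat.card_prod, Nat.card_eq_fintype_card (α := Fin n → Fin m),
    Fintype.card_fun]
  simp

lemma phi_comap_iff {Φ : GraphProperty} (hΦ : Invariant Φ) (k : ℕ) {W : Type}
    (G' : SimpleGraph W) (e e' : Fin k ≃ W) :
    Φ k (G'.comap e) ↔ Φ k (G'.comap e') := by
  apply hΦ
  refine ⟨{ toEquiv := e.trans e'.symm, map_rel_iff' := ?_ }⟩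
  intro a b
  simp

lemma phi_iso_iff {Φ : GraphProperty} (hΦ : Invariant Φ) (k : ℕ) {W W' : Type}
    {G1 : SimpleGraph W} {G2 : SimpleGraph W'} (φ : G1 ≃g G2) :
    (∃ e : Fin k ≃ W, Φ k (G1.comap e)) ↔ (∃ e : Fin k ≃ W', Φ k (G2.comap e)) := by
  have key : ∀ {A B : Type} (GA : SimpleGraph A) (GB : SimpleGraph B) (ψ : GA ≃g GB)
      (e : Fin k ≃ A), Φ k (GA.comap e) → Φ k (GB.comap (e.trans ψ.toEquiv)) := by
    intro A B GA GB ψ e h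
    have : (GB.comap (e.trans ψ.toEquiv)) = GA.comap e := by
      ext a b
      simp only [comap_adj, Equiv.trans_apply]
      exact ψ.map_rel_iff
    rwa [this]
  constructor
  · rintro ⟨e, h⟩; exact ⟨e.trans φ.toEquiv, key _ _ φ e h⟩
  · rintro ⟨e, h⟩; exact ⟨e.trans φ.symm.toEquiv, key _ _ φ.symm e h⟩

lemma indSub_eq_card (Φ : GraphProperty) (k : ℕ) {V : Type} [Fintype V]
    (G : SimpleGraph V) :
    indSub Φ k G = (Finset.univ.filter (fun S : Finset V => S.card = k ∧
      ∃ e : Fin k ≃ (S : Set V), Φ k ((G.induce (S : Set V)).comap e))).card := by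
  classical
  unfold indSub
  rw [Nat.card_eq_fintype_card, Fintype.card_subtype]

lemma sum_superset_neg_one {α : Type} [Fintype α] [DecidableEq α] (R : Finset α) :
    ∑ S ∈ Finset.univ.filter (fun S => R ⊆ S), (-1 : ℚ) ^ (Fintype.card α - S.card) =
      if R = Finset.univ then 1 else 0 := by
  classical
  have hpow : ∀ a b : ℕ, b ≤ a → (-1 : ℚ) ^ (a - b) = (-1) ^ a * (-1) ^ b := by
    intro a b h
    have h1 : (-1 : ℚ) ^ (a - b) * (-1) ^ b = (-1) ^ a := by
      rw [← pow_add, Nat.sub_add_cancel h]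
    have h2 : (-1 : ℚ) ^ b * (-1) ^ b = 1 := by
      rw [← pow_add, ← two_mul, pow_mul]; norm_num
    calc (-1 : ℚ) ^ (a - b) = (-1) ^ (a - b) * ((-1) ^ b * (-1) ^ b) := by rw [h2, mul_one]
      _ = (-1) ^ a * (-1) ^ b := by rw [← mul_assoc, h1]
  have h0 : ∀ s : Finset α, ∑ T ∈ s.powerset, (-1 : ℚ) ^ T.card =
      if s = ∅ then 1 else 0 := by
    intro s
    have := Finset.prod_add (fun _ : α => (-1 : ℚ)) (fun _ => 1) s
    rw [neg_add_cancel] at this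
    simp only [Finset.prod_const, one_pow, mul_one] at this
    rw [← this]
    rcases eq_or_ne s ∅ with h | h
    · simp [h]
    · rw [if_neg h, zero_pow]
      simpa [Finset.card_eq_zero] using h
  have hre : ∑ S ∈ Finset.univ.filter (fun S => R ⊆ S),
      (-1 : ℚ) ^ (Fintype.card α - S.card) =
      ∑ T ∈ Rᶜ.powerset, (-1 : ℚ) ^ (Fintype.card α - (R ∪ T).card) := by
    refine Finset.sum_nbij' (fun S => S \ R) (fun T => R ∪ T) ?_ ?_ ?_ ?_ ?_
    · intro S hS
      simp only [Finset.mem_filter] at hS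
      simp only [Finset.mem_powerset]
      intro x hx
      simp only [Finset.mem_sdiff] at hx
      simp [Finset.mem_compl, hx.2]
    · intro T hT
      simp only [Finset.mem_filter]
      exact ⟨Finset.mem_univ _, Finset.subset_union_left⟩
    · intro S hS
      simp only [Finset.mem_filter] at hS
      exact Finset.union_sdiff_of_subset hS.2
    · intro T hT
      simp only [Finset.mem_powerset] at hT
      refine Finset.union_sdiff_cancel_left ?_
      rw [Finset.disjoint_left]
      intro x hx hxT
      exact (Finset.mem_compl.mp (hT hxT)) hx
    · intro S hS
      simp only [Finset.mem_filter] at hS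
      rw [Finset.union_sdiff_of_subset hS.2]
  rw [hre]
  have : ∀ T ∈ Rᶜ.powerset, (-1 : ℚ) ^ (Fintype.card α - (R ∪ T).card) =
      (-1) ^ Rᶜ.card * (-1) ^ T.card := by
    intro T hT
    simp only [Finset.mem_powerset] at hT
    have hdisj : Disjoint R T := by
      rw [Finset.disjoint_right]
      intro x hxT
      exact Finset.mem_compl.mp (hT hxT)
    rw [Finset.card_union_of_disjoint hdisj]
    have h1 : R.card + T.card ≤ Fintype.card α := by
      rw [← Finset.card_union_of_disjoint hdisj]
      exact Finset.card_le_univ _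
    have h2 : Fintype.card α - (R.card + T.card) = (Rᶜ.card - T.card) := by
      rw [Finset.card_compl]; omega
    rw [h2, hpow _ _ (by rw [Finset.card_compl]; omega)]
  rw [Finset.sum_congr rfl this, ← Finset.mul_sum, h0]
  rcases eq_or_ne R Finset.univ with h | h
  · simp [h]
  · have : Rᶜ ≠ ∅ := by
      simp only [ne_eq, Finset.compl_eq_empty_iff]
      exact h
    simp [this, h]

lemma poly_ext {M : ℕ} (u v : ℕ → ℚ)
    (h : ∀ m : ℕ, ∑ n ∈ Finset.range M, u n * (m : ℚ) ^ n =
      ∑ n ∈ Finset.range M, v n * (m : ℚ) ^ n) :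
    ∀ j < M, u j = v j := by
  intro j hj
  set p : Polynomial ℚ := ∑ n ∈ Finset.range M, Polynomial.C (u n) * Polynomial.X ^ n with hp
  set q : Polynomial ℚ := ∑ n ∈ Finset.range M, Polynomial.C (v n) * Polynomial.X ^ n with hq
  have heval : ∀ m : ℕ, p.eval (m : ℚ) = q.eval (m : ℚ) := by
    intro m
    simp only [hp, hq, Polynomial.eval_finset_sum, Polynomial.eval_mul, Polynomial.eval_C,
      Polynomial.eval_pow, Polynomial.eval_X]
    exact h m
  have hpq : p = q := by
    apply Polynomial.eq_of_infinite_eval_eq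
    apply Set.Infinite.mono (s := Set.range ((↑) : ℕ → ℚ))
    · rintro x ⟨m, rfl⟩; exact heval m
    · exact Set.infinite_range_of_injective Nat.cast_injective
  have hc : ∀ (w : ℕ → ℚ),
      (∑ n ∈ Finset.range M, Polynomial.C (w n) * Polynomial.X ^ n).coeff j = w j := by
    intro w
    rw [Polynomial.finset_sum_coeff]
    simp only [Polynomial.coeff_C_mul, Polynomial.coeff_X_pow]
    rw [Finset.sum_eq_single j]
    · simp
    · intro b _ hb; simp [Ne.symm hb]
    · intro hjm; exact absurd (Finset.mem_range.mpr hj) hjm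
  have := congrArg (fun r => r.coeff j) hpq
  simpa [hp, hq, hc] using this

lemma binom_identity (d e i : ℕ) (hi : i ≤ d) (he : e ≤ d) :
    ∑ j ∈ Finset.range (i + 1), (-1 : ℚ) ^ (i - j) * ((d - j).choose (i - j) : ℚ) *
        (if e ≤ j then ((d - e).choose (j - e) : ℚ) else 0) =
      if e = i then 1 else 0 := by
  rcases lt_or_ge i e with hlt | hge
  · rw [Finset.sum_eq_zero, if_neg (by omega)]
    intro j hj
    simp only [Finset.mem_range] at hj
    rw [if_neg (by omega), mul_zero]
  · set t := i - e with ht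
    set D := d - e with hD
    have htD : t ≤ D := by omega
    have halt : ∑ s ∈ Finset.range (t + 1), (-1 : ℚ) ^ (t - s) * (t.choose s : ℚ) =
        if t = 0 then 1 else 0 := by
      have h1 : ∑ s ∈ Finset.range (t + 1), (-1 : ℚ) ^ (t - s) * (t.choose s : ℚ) =
          ∑ s ∈ Finset.range (t + 1), (-1 : ℚ) ^ s * (t.choose s : ℚ) := by
        rw [← Finset.sum_range_reflect]
        refine Finset.sum_congr rfl fun s hs => ?_
        simp only [Finset.mem_range] at hs
        have hs' : s ≤ t := by omega
        rw [Nat.add_sub_cancel]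
        rw [Nat.sub_sub_self hs', Nat.choose_symm hs']
      rw [h1]
      have h2 := Int.alternating_sum_range_choose (n := t)
      have h3 : ((∑ s ∈ Finset.range (t + 1), (-1 : ℤ) ^ s * (t.choose s : ℤ) : ℤ) : ℚ) =
          ((if t = 0 then 1 else 0 : ℤ) : ℚ) := by rw [h2]
      push_cast at h3
      convert h3 using 2
    have hE : e ≤ i + 1 := by omega
    rw [Finset.range_eq_Ico, ← Finset.sum_Ico_consecutive _ (Nat.zero_le e) hE]
    have hz : ∑ j ∈ Finset.Ico 0 e, (-1 : ℚ) ^ (i - j) * ((d - j).choose (i - j) : ℚ) *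
        (if e ≤ j then ((d - e).choose (j - e) : ℚ) else 0) = 0 := by
      refine Finset.sum_eq_zero fun j hj => ?_
      simp only [Finset.mem_Ico] at hj
      rw [if_neg (by omega), mul_zero]
    rw [hz, zero_add, Finset.sum_Ico_eq_sum_range]
    have hiet : i + 1 - e = t + 1 := by omega
    rw [hiet]
    have hstep : ∀ s ∈ Finset.range (t + 1),
        (-1 : ℚ) ^ (i - (e + s)) * ((d - (e + s)).choose (i - (e + s)) : ℚ) *
          (if e ≤ e + s then ((d - e).choose (e + s - e) : ℚ) else 0) =
        (D.choose t : ℚ) * ((-1 : ℚ) ^ (t - s) * (t.choose s : ℚ)) := by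
      intro s hs
      simp only [Finset.mem_range] at hs
      have hst : s ≤ t := by omega
      rw [if_pos (by omega)]
      have h4 : i - (e + s) = t - s := by omega
      have h5 : d - (e + s) = D - s := by omega
      have h6 : e + s - e = s := by omega
      rw [h4, h5, h6]
      have h7 : (D.choose s) * ((D - s).choose (t - s)) = D.choose t * t.choose s := by
        rw [← Nat.choose_mul (n := D) hst]
      have h8 : ((D - s).choose (t - s) : ℚ) * (D.choose s : ℚ) =
          (D.choose t : ℚ) * (t.choose s : ℚ) := by
        rw [mul_comm]
        exact_mod_cast congrArg (fun z : ℕ => (z : ℚ)) h7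
      calc (-1 : ℚ) ^ (t - s) * ((D - s).choose (t - s) : ℚ) * (D.choose s : ℚ)
          = (-1 : ℚ) ^ (t - s) * (((D - s).choose (t - s) : ℚ) * (D.choose s : ℚ)) := by
            ring
        _ = (-1 : ℚ) ^ (t - s) * ((D.choose t : ℚ) * (t.choose s : ℚ)) := by rw [h8]
        _ = (D.choose t : ℚ) * ((-1 : ℚ) ^ (t - s) * (t.choose s : ℚ)) := by ring
    rw [Finset.sum_congr rfl hstep, ← Finset.mul_sum, halt]
    rcases Nat.eq_zero_or_pos t with h | h
    · rw [if_pos h]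
      have : e = i := by omega
      simp [this, h]
    · rw [if_neg (by omega), if_neg (by omega), mul_zero]

lemma edgeCount_eq_card_edgeFinset {V : Type} [Fintype V] (G : SimpleGraph V) :
    edgeCount G = G.edgeFinset.card := by
  unfold edgeCount
  rw [SimpleGraph.edgeFinset]
  exact Nat.card_eq_card_toFinset _

lemma fVec_eq_sum (Φ : GraphProperty) (k j : ℕ) :
    (fVec Φ k j : ℚ) =
      ∑ L ∈ Finset.univ.filter (fun L : SimpleGraph (Fin k) => edgeCount L = j),
        (if Φ k L then (1 : ℚ) else 0) := by
  unfold fVec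
  rw [Nat.card_eq_fintype_card, Fintype.card_subtype]
  rw [Finset.sum_boole, Finset.filter_filter]

lemma edgeCount_le (k : ℕ) (H : SimpleGraph (Fin k)) : edgeCount H ≤ k * (k - 1) / 2 := by
  rw [edgeCount_eq_card_edgeFinset]
  calc H.edgeFinset.card ≤ (⊤ : SimpleGraph (Fin k)).edgeFinset.card :=
        Finset.card_le_card (SimpleGraph.edgeFinset_mono le_top)
    _ = (Fintype.card (Fin k)).choose 2 := SimpleGraph.card_edgeFinset_top_eq_card_choose_two
    _ = k * (k - 1) / 2 := by rw [Fintype.card_fin, Nat.choose_two_right]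

lemma homCount_induce_eq (k : ℕ) (H L : SimpleGraph (Fin k)) (S : Finset (Fin k)) :
    homCount H (L.induce (↑S : Set (Fin k))) =
      (Finset.univ.filter (fun f : H →g L => ∀ v, f v ∈ S)).card := by
  unfold homCount
  have e : (H →g L.induce (↑S : Set (Fin k))) ≃ {f : H →g L // ∀ v, f v ∈ S} :=
    { toFun := fun g => ⟨⟨fun v => (g v).1, fun h => g.map_rel h⟩, fun v =>
        Finset.mem_coe.mp (g v).2⟩
      invFun := fun f => ⟨fun v => ⟨f.1 v, Finset.mem_coe.mpr (f.2 v)⟩,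
        fun h => f.1.map_rel h⟩
      left_inv := fun g => rfl
      right_inv := fun f => rfl }
  rw [Nat.card_congr e, Nat.card_eq_fintype_card, Fintype.card_subtype]

lemma sum_induce_hom (k : ℕ) (H L : SimpleGraph (Fin k)) :
    ∑ S : Finset (Fin k), (-1 : ℚ) ^ (k - S.card) *
        (homCount H (L.induce (↑S : Set (Fin k))) : ℚ) =
      (Nat.card {f : H →g L // Function.Surjective f} : ℚ) := by
  have h1 : ∀ S : Finset (Fin k), ((homCount H (L.induce (↑S : Set (Fin k)))) : ℚ) =
      ∑ f : H →g L, (if Finset.univ.image ⇑f ⊆ S then (1 : ℚ) else 0) := by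
    intro S
    rw [homCount_induce_eq, Finset.sum_boole]
    congr 2
    ext f
    simp [Finset.image_subset_iff]
  calc ∑ S : Finset (Fin k), (-1 : ℚ) ^ (k - S.card) *
        (homCount H (L.induce (↑S : Set (Fin k))) : ℚ)
      = ∑ S : Finset (Fin k), ∑ f : H →g L,
          (-1 : ℚ) ^ (k - S.card) * (if Finset.univ.image ⇑f ⊆ S then (1 : ℚ) else 0) := by
        refine Finset.sum_congr rfl fun S _ => ?_
        rw [h1, Finset.mul_sum]
    _ = ∑ f : H →g L, ∑ S : Finset (Fin k),
          (-1 : ℚ) ^ (k - S.card) * (if Finset.univ.image ⇑f ⊆ S then (1 : ℚ) else 0) :=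
        Finset.sum_comm
    _ = ∑ f : H →g L, (if Function.Surjective f then (1 : ℚ) else 0) := by
        refine Finset.sum_congr rfl fun f _ => ?_
        have hc : ∀ S : Finset (Fin k), (-1 : ℚ) ^ (k - S.card) *
            (if Finset.univ.image ⇑f ⊆ S then (1 : ℚ) else 0) =
            if Finset.univ.image ⇑f ⊆ S then (-1 : ℚ) ^ (k - S.card) else 0 := by
          intro S; split <;> simp
        rw [Finset.sum_congr rfl fun S _ => hc S, ← Finset.sum_filter]
        have hss := sum_superset_neg_one (Finset.univ.image ⇑f)
        simp only [Fintype.card_fin] at hss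
        rw [hss]
        have hiff : (Finset.univ.image ⇑f = Finset.univ) ↔ Function.Surjective ⇑f := by
          constructor
          · intro h y
            have : y ∈ Finset.univ.image ⇑f := by rw [h]; exact Finset.mem_univ y
            simpa [Finset.mem_image] using this
          · intro h
            refine Finset.eq_univ_iff_forall.mpr fun y => ?_
            rcases h y with ⟨x, rfl⟩
            exact Finset.mem_image_of_mem _ (Finset.mem_univ x)
        simp only [hiff]
    _ = (Nat.card {f : H →g L // Function.Surjective f} : ℚ) := by
        rw [Finset.sum_boole, Nat.card_eq_fintype_card, Fintype.card_subtype]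

lemma edgeCount_iso {V W : Type} {G : SimpleGraph V} {G' : SimpleGraph W} (e : G ≃g G') :
    edgeCount G = edgeCount G' :=
  Nat.card_congr e.mapEdgeSet

lemma surj_eq_perm_count (k : ℕ) (H L : SimpleGraph (Fin k)) :
    Nat.card {f : H →g L // Function.Surjective f} =
      (Finset.univ.filter (fun σ : Equiv.Perm (Fin k) =>
        ∀ u v, H.Adj u v → L.Adj (σ u) (σ v))).card := by
  have e : {f : H →g L // Function.Surjective f} ≃
      {σ : Equiv.Perm (Fin k) // ∀ u v, H.Adj u v → L.Adj (σ u) (σ v)} :=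
    { toFun := fun f => ⟨Equiv.ofBijective f.1
        ⟨Finite.injective_iff_surjective.mpr f.2, f.2⟩, fun u v h => f.1.map_rel h⟩
      invFun := fun σ => ⟨⟨⇑σ.1, fun h => σ.2 _ _ h⟩, σ.1.surjective⟩
      left_inv := fun f => Subtype.ext (RelHom.ext fun v => rfl)
      right_inv := fun σ => Subtype.ext (Equiv.ext fun v => rfl) }
  rw [Nat.card_congr e, Nat.card_eq_fintype_card, Fintype.card_subtype]

lemma ned_count (k j : ℕ) (H : SimpleGraph (Fin k)) :
    (Finset.univ.filter (fun L' : SimpleGraph (Fin k) => edgeCount L' = j ∧ H ≤ L')).card =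
      if edgeCount H ≤ j then
        (k * (k - 1) / 2 - edgeCount H).choose (j - edgeCount H) else 0 := by
  by_cases hej : edgeCount H ≤ j
  · rw [if_pos hej]
    have hsub : H.edgeFinset ⊆ (⊤ : SimpleGraph (Fin k)).edgeFinset :=
      SimpleGraph.edgeFinset_mono le_top
    have hcard : ((⊤ : SimpleGraph (Fin k)).edgeFinset \ H.edgeFinset).card =
        k * (k - 1) / 2 - edgeCount H := by
      rw [Finset.card_sdiff_of_subset hsub, SimpleGraph.card_edgeFinset_top_eq_card_choose_two,
        Fintype.card_fin, Nat.choose_two_right, edgeCount_eq_card_edgeFinset]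
    have key : (Finset.univ.filter
        (fun L' : SimpleGraph (Fin k) => edgeCount L' = j ∧ H ≤ L')).card =
        (((⊤ : SimpleGraph (Fin k)).edgeFinset \ H.edgeFinset).powersetCard
          (j - edgeCount H)).card := by
      have hprep : ∀ E ∈ ((⊤ : SimpleGraph (Fin k)).edgeFinset \ H.edgeFinset).powersetCard
          (j - edgeCount H),
          (SimpleGraph.fromEdgeSet (↑(H.edgeFinset ∪ E) : Set (Sym2 (Fin k)))).edgeSet =
            (↑(H.edgeFinset ∪ E) : Set (Sym2 (Fin k))) ∧
          Disjoint H.edgeFinset E ∧ E.card = j - edgeCount H := by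
        intro E hE
        rw [Finset.mem_powersetCard] at hE
        have hEsub : E ⊆ (⊤ : SimpleGraph (Fin k)).edgeFinset \ H.edgeFinset := hE.1
        have hnd : ∀ x ∈ H.edgeFinset ∪ E, ¬ x.IsDiag := by
          intro x hx
          rcases Finset.mem_union.mp hx with h | h
          · exact SimpleGraph.not_isDiag_of_mem_edgeSet _ (SimpleGraph.mem_edgeFinset.mp h)
          · have h2 := (Finset.mem_sdiff.mp (hEsub h)).1
            exact SimpleGraph.not_isDiag_of_mem_edgeSet _ (SimpleGraph.mem_edgeFinset.mp h2)
        refine ⟨?_, ?_, hE.2⟩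
        · rw [SimpleGraph.edgeSet_fromEdgeSet]
          ext x
          simp only [Set.mem_diff, Set.mem_setOf_eq, Finset.mem_coe, and_iff_left_iff_imp]
          exact fun hx => hnd x hx
        · rw [Finset.disjoint_right]
          intro x hxE
          exact (Finset.mem_sdiff.mp (hEsub hxE)).2
      refine Finset.card_nbij' (fun L' => L'.edgeFinset \ H.edgeFinset)
        (fun E => SimpleGraph.fromEdgeSet (↑(H.edgeFinset ∪ E) : Set (Sym2 (Fin k))))
        ?_ ?_ ?_ ?_
      · intro L' hL'
        simp only [Finset.mem_coe, Finset.mem_filter, Finset.mem_univ, true_and] at hL'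
        rw [Finset.mem_coe, Finset.mem_powersetCard]
        have hHL : H.edgeFinset ⊆ L'.edgeFinset := SimpleGraph.edgeFinset_mono hL'.2
        constructor
        · exact Finset.sdiff_subset_sdiff (SimpleGraph.edgeFinset_mono le_top)
            (Finset.Subset.refl _)
        · rw [Finset.card_sdiff_of_subset hHL, ← edgeCount_eq_card_edgeFinset,
            ← edgeCount_eq_card_edgeFinset, hL'.1]
      · intro E hE
        obtain ⟨hes, hdisj, hEcard⟩ := hprep E hE
        simp only [Finset.mem_coe, Finset.mem_filter, Finset.mem_univ, true_and]
        constructor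
        · show edgeCount _ = j
          unfold edgeCount
          rw [hes, Nat.card_coe_set_eq, Set.ncard_coe_finset,
            Finset.card_union_of_disjoint hdisj, hEcard, ← edgeCount_eq_card_edgeFinset]
          omega
        · rw [← SimpleGraph.edgeSet_subset_edgeSet, hes, ← SimpleGraph.coe_edgeFinset]
          exact_mod_cast Finset.subset_union_left
      · intro L' hL'
        dsimp only
        simp only [Finset.mem_coe, Finset.mem_filter, Finset.mem_univ, true_and] at hL'
        rw [Finset.union_sdiff_of_subset (SimpleGraph.edgeFinset_mono hL'.2),
          SimpleGraph.coe_edgeFinset, SimpleGraph.fromEdgeSet_edgeSet]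
      · intro E hE
        dsimp only
        obtain ⟨hes, hdisj, hEcard⟩ := hprep E hE
        ext x
        simp only [Finset.mem_sdiff, SimpleGraph.mem_edgeFinset, hes, Finset.mem_coe,
          Finset.mem_union]
        constructor
        · rintro ⟨h | h, hn⟩
          · exact absurd h hn
          · exact h
        · intro h
          exact ⟨Or.inr h, fun hH =>
            (Finset.disjoint_left.mp hdisj (SimpleGraph.mem_edgeFinset.mpr hH)) h⟩
    rw [key, Finset.card_powersetCard, hcard]
  · rw [if_neg hej]
    rw [Finset.card_eq_zero, Finset.filter_eq_empty_iff]
    intro L' _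
    rintro ⟨h1, h2⟩
    have : edgeCount H ≤ edgeCount L' := by
      rw [edgeCount_eq_card_edgeFinset, edgeCount_eq_card_edgeFinset]
      exact Finset.card_le_card (SimpleGraph.edgeFinset_mono h2)
    omega

lemma sum_surj_count (k : ℕ) (H : SimpleGraph (Fin k)) (j : ℕ) :
    ∑ L ∈ Finset.univ.filter (fun L : SimpleGraph (Fin k) => edgeCount L = j),
        (Nat.card {f : H →g L // Function.Surjective f}) =
      k.factorial * (if edgeCount H ≤ j then
        (k * (k - 1) / 2 - edgeCount H).choose (j - edgeCount H) else 0) := by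
  have hcomap_e : ∀ (σ : Equiv.Perm (Fin k)) (L : SimpleGraph (Fin k)),
      edgeCount (L.comap ⇑σ) = edgeCount L := by
    intro σ L
    exact edgeCount_iso (SimpleGraph.Iso.comap σ L)
  calc ∑ L ∈ Finset.univ.filter (fun L : SimpleGraph (Fin k) => edgeCount L = j),
        (Nat.card {f : H →g L // Function.Surjective f})
      = ∑ L ∈ Finset.univ.filter (fun L : SimpleGraph (Fin k) => edgeCount L = j),
        ∑ σ : Equiv.Perm (Fin k),
          (if ∀ u v, H.Adj u v → L.Adj (σ u) (σ v) then 1 else 0) := by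
        refine Finset.sum_congr rfl fun L _ => ?_
        rw [surj_eq_perm_count, Finset.sum_boole]
        simp
    _ = ∑ σ : Equiv.Perm (Fin k), ∑ L ∈ Finset.univ.filter
          (fun L : SimpleGraph (Fin k) => edgeCount L = j),
          (if ∀ u v, H.Adj u v → L.Adj (σ u) (σ v) then 1 else 0) := Finset.sum_comm
    _ = ∑ σ : Equiv.Perm (Fin k), (Finset.univ.filter
          (fun L' : SimpleGraph (Fin k) => edgeCount L' = j ∧ H ≤ L')).card := by
        refine Finset.sum_congr rfl fun σ _ => ?_
        rw [Finset.sum_boole, ← Finset.filter_filter]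
        norm_num
        refine Finset.card_nbij' (fun L => L.comap ⇑σ) (fun L' => L'.comap ⇑σ.symm)
          ?_ ?_ ?_ ?_
        · intro L hL
          simp only [Finset.mem_coe, Finset.mem_filter, Finset.mem_univ, true_and] at hL ⊢
          refine ⟨by rw [hcomap_e]; exact hL.1, fun u v h => hL.2 u v h⟩
        · intro L' hL'
          simp only [Finset.mem_coe, Finset.mem_filter, Finset.mem_univ, true_and] at hL' ⊢
          refine ⟨hcomap_e σ.symm L' ▸ hL'.1, fun u v h => ?_⟩
          show L'.Adj (σ.symm (σ u)) (σ.symm (σ v))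
          simpa using hL'.2 h
        · intro L hL
          ext a b
          show L.Adj (σ (σ.symm a)) (σ (σ.symm b)) ↔ L.Adj a b
          simp
        · intro L' hL'
          ext a b
          show L'.Adj (σ.symm (σ a)) (σ.symm (σ b)) ↔ L'.Adj a b
          simp
    _ = k.factorial * (if edgeCount H ≤ j then
        (k * (k - 1) / 2 - edgeCount H).choose (j - edgeCount H) else 0) := by
        rw [Finset.sum_const, Finset.card_univ, Fintype.card_perm, Fintype.card_fin,
          smul_eq_mul]
        congr 1
        exact ned_count k j H

section key
variable (Φ : GraphProperty) (k : ℕ) (L : SimpleGraph (Fin k)) (m : ℕ)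

/-- the (global) condition on a subset of the blown-up vertex set -/
def PB (Φ : GraphProperty) (k : ℕ) (L : SimpleGraph (Fin k)) (m : ℕ)
    (T : Finset (Fin k × Fin m)) : Prop :=
  T.card = k ∧ ∃ e : Fin k ≃ (T : Set (Fin k × Fin m)),
    Φ k (((blowup L m).induce (T : Set (Fin k × Fin m))).comap e)

/-- Step A -/
lemma indSub_blowup_induce (hΦ : Invariant Φ) (S : Finset (Fin k)) :
    indSub Φ k (blowup (L.induce (↑S : Set (Fin k))) m) =
      (Finset.univ.filter (fun T : Finset (Fin k × Fin m) =>
        PB Φ k L m T ∧ T.image Prod.fst ⊆ S)).card := by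
  classical
  rw [indSub_eq_card]
  set ε : (↥(↑S : Set (Fin k)) × Fin m) ↪ (Fin k × Fin m) :=
    ⟨fun p => (p.1.1, p.2), by
      rintro ⟨⟨a, ha⟩, i⟩ ⟨⟨b, hb⟩, j⟩ h
      simp only [Prod.mk.injEq] at h
      simp [Prod.ext_iff, Subtype.ext_iff, h.1, h.2]⟩ with hε
  have hiso : ∀ T' : Finset (↥(↑S : Set (Fin k)) × Fin m),
      Nonempty ((blowup (L.induce (↑S : Set (Fin k))) m).induce
        (↑T' : Set (↥(↑S : Set (Fin k)) × Fin m)) ≃g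
        (blowup L m).induce (↑(T'.map ε) : Set (Fin k × Fin m))) := by
    intro T'
    have hbij : Function.Bijective (fun x : (↑T' : Set (↥(↑S : Set (Fin k)) × Fin m)) =>
        (⟨ε x.1, by simpa using Finset.mem_map_of_mem ε (Finset.mem_coe.mp x.2)⟩ :
          (↑(T'.map ε) : Set (Fin k × Fin m)))) := by
      constructor
      · rintro ⟨x, hx⟩ ⟨y, hy⟩ h
        simp only [Subtype.mk.injEq] at h
        exact Subtype.ext (ε.injective h)
      · rintro ⟨y, hy⟩
        obtain ⟨x, hx, rfl⟩ := Finset.mem_map.mp (Finset.mem_coe.mp hy)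
        exact ⟨⟨x, hx⟩, rfl⟩
    exact ⟨{ toEquiv := Equiv.ofBijective _ hbij, map_rel_iff' := Iff.rfl }⟩
  have hround : ∀ T : Finset (Fin k × Fin m), T.image Prod.fst ⊆ S →
      (T.preimage ε ε.injective.injOn).map ε = T := by
    intro T hT
    ext x
    simp only [Finset.mem_map, Finset.mem_preimage]
    constructor
    · rintro ⟨y, hy, rfl⟩; exact hy
    · intro hx
      have hv : x.1 ∈ S := hT (Finset.mem_image_of_mem Prod.fst hx)
      exact ⟨⟨⟨x.1, hv⟩, x.2⟩, hx, rfl⟩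
  refine Finset.card_nbij' (fun T' => T'.map ε)
    (fun T => T.preimage ε ε.injective.injOn) ?_ ?_ ?_ ?_
  · intro T' hT'
    simp only [Finset.mem_coe, Finset.mem_filter, Finset.mem_univ, true_and] at hT' ⊢
    obtain ⟨hcard, hφ⟩ := hT'
    refine ⟨⟨by rw [Finset.card_map]; exact hcard,
      (phi_iso_iff hΦ k (hiso T').some).mp hφ⟩, ?_⟩
    intro v hv
    obtain ⟨x, hx, rfl⟩ := Finset.mem_image.mp hv
    obtain ⟨y, hy, rfl⟩ := Finset.mem_map.mp hx
    exact y.1.2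
  · intro T hT
    simp only [Finset.mem_coe, Finset.mem_filter, Finset.mem_univ, true_and] at hT ⊢
    obtain ⟨⟨hcard, hφ⟩, hsub⟩ := hT
    have hmape := hround T hsub
    constructor
    · rw [← Finset.card_map ε, hmape]; exact hcard
    · refine (phi_iso_iff hΦ k (hiso (T.preimage ε ε.injective.injOn)).some).mpr ?_
      rw [hmape]
      exact hφ
  · intro T' _
    exact Finset.preimage_map ε T'
  · intro T hT
    simp only [Finset.mem_coe, Finset.mem_filter, Finset.mem_univ, true_and] at hT
    exact hround T hT.2

/-- Step C: transversal count -/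
lemma transversal_count (hΦ : Invariant Φ) :
    (Finset.univ.filter (fun T : Finset (Fin k × Fin m) =>
        PB Φ k L m T ∧ T.image Prod.fst = Finset.univ)).card =
      if Φ k L then m ^ k else 0 := by
  classical
  set gr : (Fin k → Fin m) → Finset (Fin k × Fin m) :=
    fun τ => Finset.univ.image (fun v => (v, τ v)) with hgr
  have hmemgr : ∀ (τ : Fin k → Fin m) (v : Fin k) (j : Fin m),
      ((v, j) ∈ gr τ) ↔ τ v = j := by
    intro τ v j
    simp only [hgr, Finset.mem_image, Finset.mem_univ, true_and, Prod.mk.injEq]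
    constructor
    · rintro ⟨w, hw, rfl⟩; exact hw ▸ rfl
    · rintro rfl; exact ⟨v, rfl, rfl⟩
  have hginj : ∀ τ : Fin k → Fin m, Function.Injective (fun v : Fin k => (v, τ v)) := by
    intro τ u v h
    exact (Prod.ext_iff.mp h).1
  have hcardgr : ∀ τ : Fin k → Fin m, (gr τ).card = k := by
    intro τ
    rw [hgr]
    rw [Finset.card_image_of_injective _ (hginj τ), Finset.card_univ, Fintype.card_fin]
  have himggr : ∀ τ : Fin k → Fin m, (gr τ).image Prod.fst = Finset.univ := by
    intro τ
    refine Finset.eq_univ_iff_forall.mpr fun v => ?_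
    exact Finset.mem_image.mpr ⟨(v, τ v), (hmemgr τ v (τ v)).mpr rfl, rfl⟩
  have hPBgr : ∀ τ : Fin k → Fin m, PB Φ k L m (gr τ) ↔ Φ k L := by
    intro τ
    have hbij : Function.Bijective (fun v : Fin k =>
        (⟨(v, τ v), Finset.mem_coe.mpr ((hmemgr τ v (τ v)).mpr rfl)⟩ :
          (↑(gr τ) : Set (Fin k × Fin m)))) := by
      constructor
      · intro u v h
        have h2 := congrArg (fun x : (↑(gr τ) : Set (Fin k × Fin m)) =>
          (x : Fin k × Fin m).1) h
        exact h2
      · rintro ⟨⟨v, j⟩, hx⟩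
        have : τ v = j := (hmemgr τ v j).mp (Finset.mem_coe.mp hx)
        exact ⟨v, by simp [this]⟩
    set eτ : Fin k ≃ (↑(gr τ) : Set (Fin k × Fin m)) := Equiv.ofBijective _ hbij with heτ
    have hcomap : (((blowup L m).induce (↑(gr τ) : Set (Fin k × Fin m))).comap eτ) = L := by
      ext a b
      rfl
    unfold PB
    rw [hcardgr τ]
    simp only [true_and]
    constructor
    · rintro ⟨e, h⟩
      rw [← hcomap]
      exact (phi_comap_iff hΦ k _ e eτ).mp h
    · intro h
      exact ⟨eτ, by rw [hcomap]; exact h⟩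
  have hrev : ∀ T : Finset (Fin k × Fin m), T.card = k →
      T.image Prod.fst = Finset.univ → ∃ τ : Fin k → Fin m, T = gr τ := by
    intro T hcard himg
    have hex : ∀ v : Fin k, ∃ j, (v, j) ∈ T := by
      intro v
      have : v ∈ T.image Prod.fst := by rw [himg]; exact Finset.mem_univ v
      obtain ⟨x, hx, rfl⟩ := Finset.mem_image.mp this
      exact ⟨x.2, hx⟩
    choose τ hτ using hex
    refine ⟨τ, ?_⟩
    have hsub : gr τ ⊆ T := by
      intro x hx
      obtain ⟨v, _, rfl⟩ := Finset.mem_image.mp hx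
      exact hτ v
    exact (Finset.eq_of_subset_of_card_le hsub (by rw [hcard, hcardgr τ])).symm
  have hinjT : Function.Injective gr := by
    intro τ τ' h
    funext v
    have : (v, τ v) ∈ gr τ' := by rw [← h]; exact (hmemgr τ v (τ v)).mpr rfl
    exact ((hmemgr τ' v (τ v)).mp this).symm
  by_cases hΦL : Φ k L
  · rw [if_pos hΦL]
    have hset : Finset.univ.filter (fun T : Finset (Fin k × Fin m) =>
        PB Φ k L m T ∧ T.image Prod.fst = Finset.univ) =
        Finset.univ.image gr := by
      ext T
      simp only [Finset.mem_filter, Finset.mem_univ, true_and, Finset.mem_image]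
      constructor
      · rintro ⟨hPBT, himg⟩
        obtain ⟨τ, rfl⟩ := hrev T hPBT.1 himg
        exact ⟨τ, rfl⟩
      · rintro ⟨τ, rfl⟩
        exact ⟨(hPBgr τ).mpr hΦL, himggr τ⟩
    rw [hset, Finset.card_image_of_injective _ hinjT, Finset.card_univ, Fintype.card_fun]
    simp
  · rw [if_neg hΦL, Finset.card_eq_zero, Finset.filter_eq_empty_iff]
    intro T _
    rintro ⟨hPBT, himg⟩
    obtain ⟨τ, rfl⟩ := hrev T hPBT.1 himg
    exact hΦL ((hPBgr τ).mp hPBT)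

/-- Key lemma -/
lemma key_blowup (hΦ : Invariant Φ) :
    ∑ S : Finset (Fin k), (-1 : ℚ) ^ (k - S.card) *
        (indSub Φ k (blowup (L.induce (↑S : Set (Fin k))) m) : ℚ) =
      (if Φ k L then 1 else 0) * (m : ℚ) ^ k := by
  classical
  calc ∑ S : Finset (Fin k), (-1 : ℚ) ^ (k - S.card) *
        (indSub Φ k (blowup (L.induce (↑S : Set (Fin k))) m) : ℚ)
      = ∑ S : Finset (Fin k), ∑ T : Finset (Fin k × Fin m),
          (-1 : ℚ) ^ (k - S.card) *
          (if PB Φ k L m T ∧ T.image Prod.fst ⊆ S then 1 else 0) := by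
        refine Finset.sum_congr rfl fun S _ => ?_
        rw [indSub_blowup_induce Φ k L m hΦ S, ← Finset.mul_sum, Finset.sum_boole]
    _ = ∑ T : Finset (Fin k × Fin m), ∑ S : Finset (Fin k),
          (-1 : ℚ) ^ (k - S.card) *
          (if PB Φ k L m T ∧ T.image Prod.fst ⊆ S then 1 else 0) := Finset.sum_comm
    _ = ∑ T : Finset (Fin k × Fin m),
          (if PB Φ k L m T ∧ T.image Prod.fst = Finset.univ then (1 : ℚ) else 0) := by
        refine Finset.sum_congr rfl fun T _ => ?_
        by_cases hPBT : PB Φ k L m T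
        · simp only [hPBT, true_and]
          have hc : ∀ S : Finset (Fin k), (-1 : ℚ) ^ (k - S.card) *
              (if T.image Prod.fst ⊆ S then (1 : ℚ) else 0) =
              if T.image Prod.fst ⊆ S then (-1 : ℚ) ^ (k - S.card) else 0 := by
            intro S; split <;> simp
          rw [Finset.sum_congr rfl fun S _ => hc S, ← Finset.sum_filter]
          have hss := sum_superset_neg_one (T.image Prod.fst)
          simp only [Fintype.card_fin] at hss
          rw [hss]
        · simp [hPBT]
    _ = (if Φ k L then 1 else 0) * (m : ℚ) ^ k := by
        rw [Finset.sum_boole]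
        have := transversal_count Φ k L m hΦ
        rw [this]  -- needs converting card to cast
        split <;> simp

end key


/-- grouped coefficient sums -/
noncomputable def AA (a : (Σ n, GraphClass n) → ℚ) (n : ℕ) {V : Type} [Fintype V]
    (G : SimpleGraph V) : ℚ :=
  ∑ c : GraphClass n, a ⟨n, c⟩ * (classHomCount c G : ℚ)

lemma indSub_blowup_poly (Φ : GraphProperty) (k : ℕ)
    (a : (Σ n, GraphClass n) → ℚ)
    (heq : ∀ (V : Type) [Fintype V], ∀ G : SimpleGraph V,
      (indSub Φ k G : ℚ) = ∑ᶠ c : Σ n, GraphClass n, a c * (classHomCount c.2 G : ℚ))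
    {V : Type} [Fintype V] (G : SimpleGraph V) (N : ℕ)
    (hN : ∀ c : Σ n, GraphClass n, a c ≠ 0 → c.1 ≤ N) (m : ℕ) :
    (indSub Φ k (blowup G m) : ℚ) =
      ∑ n ∈ Finset.range (N + 1), AA a n G * (m : ℚ) ^ n := by
  rw [heq _ (blowup G m)]
  have hsupp : Function.support
      (fun c : Σ n, GraphClass n => a c * (classHomCount c.2 (blowup G m) : ℚ)) ⊆
      ↑((Finset.range (N + 1)).sigma
        (fun n => (Finset.univ : Finset (GraphClass n)))) := by
    intro c hc
    simp only [Function.mem_support] at hc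
    have ha : a c ≠ 0 := fun h => hc (by rw [h, zero_mul])
    simp only [Finset.coe_sigma, Set.mem_sigma_iff, Finset.mem_coe, Finset.mem_range,
      Finset.mem_univ, and_true]
    exact Nat.lt_succ_of_le (hN c ha)
  rw [finsum_eq_sum_of_support_subset _ hsupp, Finset.sum_sigma]
  refine Finset.sum_congr rfl fun n hn => ?_
  unfold AA
  rw [Finset.sum_mul]
  refine Finset.sum_congr rfl fun c _ => ?_
  unfold classHomCount
  rw [homCount_blowup]
  push_cast
  ring

lemma main_extraction (Φ : GraphProperty) (hΦ : Invariant Φ) (k : ℕ)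
    (a : (Σ n, GraphClass n) → ℚ) (ha : (Function.support a).Finite)
    (heq : ∀ (V : Type) [Fintype V], ∀ G : SimpleGraph V,
      (indSub Φ k G : ℚ) = ∑ᶠ c : Σ n, GraphClass n, a c * (classHomCount c.2 G : ℚ))
    (L : SimpleGraph (Fin k)) :
    ∑ c : GraphClass k, a ⟨k, c⟩ *
        (Nat.card {f : (Quotient.out c) →g L // Function.Surjective f} : ℚ) =
      if Φ k L then 1 else 0 := by
  classical
  set N := max k (ha.toFinset.sup (fun c => c.1)) with hNdef
  have hkN : k ≤ N := le_max_left _ _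
  have hbound : ∀ c : Σ n, GraphClass n, a c ≠ 0 → c.1 ≤ N := by
    intro c hc
    exact le_trans (Finset.le_sup (ha.mem_toFinset.mpr hc)) (le_max_right _ _)
  set u : ℕ → ℚ := fun n => ∑ S : Finset (Fin k),
    (-1 : ℚ) ^ (k - S.card) * AA a n (L.induce (↑S : Set (Fin k))) with hu
  set v : ℕ → ℚ := fun n => if n = k then (if Φ k L then 1 else 0) else 0 with hv
  have hpoly_eval : ∀ m : ℕ, ∑ n ∈ Finset.range (N + 1), u n * (m : ℚ) ^ n =
      ∑ n ∈ Finset.range (N + 1), v n * (m : ℚ) ^ n := by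
    intro m
    have hlhs : ∑ n ∈ Finset.range (N + 1), u n * (m : ℚ) ^ n =
        ∑ S : Finset (Fin k), (-1 : ℚ) ^ (k - S.card) *
          (indSub Φ k (blowup (L.induce (↑S : Set (Fin k))) m) : ℚ) := by
      calc ∑ n ∈ Finset.range (N + 1), u n * (m : ℚ) ^ n
          = ∑ n ∈ Finset.range (N + 1), ∑ S : Finset (Fin k),
            ((-1 : ℚ) ^ (k - S.card) * AA a n (L.induce (↑S : Set (Fin k))) *
              (m : ℚ) ^ n) := by
            refine Finset.sum_congr rfl fun n _ => ?_
            simp only [hu]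
            rw [Finset.sum_mul]
        _ = ∑ S : Finset (Fin k), ∑ n ∈ Finset.range (N + 1),
            ((-1 : ℚ) ^ (k - S.card) * AA a n (L.induce (↑S : Set (Fin k))) *
              (m : ℚ) ^ n) := Finset.sum_comm
        _ = ∑ S : Finset (Fin k), (-1 : ℚ) ^ (k - S.card) *
            (indSub Φ k (blowup (L.induce (↑S : Set (Fin k))) m) : ℚ) := by
            refine Finset.sum_congr rfl fun S _ => ?_
            rw [indSub_blowup_poly Φ k a heq _ N hbound m, Finset.mul_sum]
            refine Finset.sum_congr rfl fun n _ => ?_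
            ring
    rw [hlhs, key_blowup Φ k L m hΦ]
    have hrhs : ∑ n ∈ Finset.range (N + 1), v n * (m : ℚ) ^ n =
        (if Φ k L then 1 else 0) * (m : ℚ) ^ k := by
      simp only [hv]
      rw [Finset.sum_eq_single k]
      · simp
      · intro b _ hb; simp [hb]
      · intro hk; exact absurd (Finset.mem_range.mpr (Nat.lt_succ_of_le hkN)) hk
    rw [hrhs]
  have hcoef := poly_ext u v hpoly_eval k (Nat.lt_succ_of_le hkN)
  have huk : u k = ∑ c : GraphClass k, a ⟨k, c⟩ *
      (Nat.card {f : (Quotient.out c) →g L // Function.Surjective f} : ℚ) := by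
    simp only [hu]
    calc ∑ S : Finset (Fin k), (-1 : ℚ) ^ (k - S.card) *
          AA a k (L.induce (↑S : Set (Fin k)))
        = ∑ S : Finset (Fin k), ∑ c : GraphClass k,
            a ⟨k, c⟩ * ((-1 : ℚ) ^ (k - S.card) *
              (homCount (Quotient.out c) (L.induce (↑S : Set (Fin k))) : ℚ)) := by
          refine Finset.sum_congr rfl fun S _ => ?_
          unfold AA classHomCount
          rw [Finset.mul_sum]
          refine Finset.sum_congr rfl fun c _ => ?_
          ring
      _ = ∑ c : GraphClass k, ∑ S : Finset (Fin k),
            a ⟨k, c⟩ * ((-1 : ℚ) ^ (k - S.card) *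
              (homCount (Quotient.out c) (L.induce (↑S : Set (Fin k))) : ℚ)) :=
          Finset.sum_comm
      _ = ∑ c : GraphClass k, a ⟨k, c⟩ *
            (Nat.card {f : (Quotient.out c) →g L // Function.Surjective f} : ℚ) := by
          refine Finset.sum_congr rfl fun c _ => ?_
          rw [← Finset.mul_sum, ← sum_induce_hom k (Quotient.out c) L]
  rw [← huk, hcoef]
  simp [hv]

end

/-- `k! · Σ_{K ∈ H_i} a(K) = h^{Φ,k}_i`, where the sum is over all isomorphism classes of
graphs on `k` vertices with exactly `i` edges. -/
theorem stmt7 (Φ : GraphProperty) (hΦ : Invariant Φ) (k : ℕ) (hk : 0 < k)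
    (a : (Σ n, GraphClass n) → ℚ) (ha : (Function.support a).Finite)
    (heq : ∀ (V : Type) [Fintype V], ∀ G : SimpleGraph V,
      (indSub Φ k G : ℚ) = ∑ᶠ c : Σ n, GraphClass n, a c * (classHomCount c.2 G : ℚ))
    (i : ℕ) (hi : i ≤ k * (k - 1) / 2) :
    (Nat.factorial k : ℚ) *
        ∑ᶠ (c : GraphClass k) (_ : edgeCount (Quotient.out c) = i), a ⟨k, c⟩ =
      hVec Φ k i := by
  classical
  have hLHS : (∑ᶠ (c : GraphClass k) (_ : edgeCount (Quotient.out c) = i), a ⟨k, c⟩) =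
      ∑ c : GraphClass k, (if edgeCount (Quotient.out c) = i then a ⟨k, c⟩ else 0) := by
    rw [finsum_eq_sum_of_fintype]
    exact Finset.sum_congr rfl fun c _ => finsum_eq_if
  rw [hLHS]
  have key1 : ∀ j : ℕ, ∑ L ∈ Finset.univ.filter
        (fun L : SimpleGraph (Fin k) => edgeCount L = j), (if Φ k L then (1 : ℚ) else 0) =
      ∑ c : GraphClass k, a ⟨k, c⟩ * ∑ L ∈ Finset.univ.filter
        (fun L : SimpleGraph (Fin k) => edgeCount L = j),
        (Nat.card {f : (Quotient.out c) →g L // Function.Surjective f} : ℚ) := by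
    intro j
    rw [Finset.sum_congr rfl fun L _ => (main_extraction Φ hΦ k a ha heq L).symm]
    rw [Finset.sum_comm]
    exact Finset.sum_congr rfl fun c _ => (Finset.mul_sum _ _ _).symm
  have key2 : ∀ c : GraphClass k, ∑ j ∈ Finset.range (i + 1),
        ((-1 : ℚ) ^ (i - j) * ((k * (k - 1) / 2 - j).choose (i - j) : ℚ) *
        ∑ L ∈ Finset.univ.filter (fun L : SimpleGraph (Fin k) => edgeCount L = j),
          (Nat.card {f : (Quotient.out c) →g L // Function.Surjective f} : ℚ)) =
      (Nat.factorial k : ℚ) *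
        (if edgeCount (Quotient.out c) = i then 1 else 0) := by
    intro c
    have hcast : ∀ j : ℕ, ∑ L ∈ Finset.univ.filter
          (fun L : SimpleGraph (Fin k) => edgeCount L = j),
          (Nat.card {f : (Quotient.out c) →g L // Function.Surjective f} : ℚ) =
        (Nat.factorial k : ℚ) * (if edgeCount (Quotient.out c) ≤ j then
          (((k * (k - 1) / 2 - edgeCount (Quotient.out c)).choose
            (j - edgeCount (Quotient.out c)) : ℕ) : ℚ) else 0) := by
      intro j
      rw [← Nat.cast_sum, sum_surj_count k (Quotient.out c) j]
      split_ifs with h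
      · push_cast; ring
      · push_cast; ring
    calc ∑ j ∈ Finset.range (i + 1),
          ((-1 : ℚ) ^ (i - j) * ((k * (k - 1) / 2 - j).choose (i - j) : ℚ) *
          ∑ L ∈ Finset.univ.filter (fun L : SimpleGraph (Fin k) => edgeCount L = j),
            (Nat.card {f : (Quotient.out c) →g L // Function.Surjective f} : ℚ))
        = ∑ j ∈ Finset.range (i + 1), (Nat.factorial k : ℚ) *
            ((-1 : ℚ) ^ (i - j) * ((k * (k - 1) / 2 - j).choose (i - j) : ℚ) *
            (if edgeCount (Quotient.out c) ≤ j then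
              (((k * (k - 1) / 2 - edgeCount (Quotient.out c)).choose
                (j - edgeCount (Quotient.out c)) : ℕ) : ℚ) else 0)) := by
          refine Finset.sum_congr rfl fun j _ => ?_
          rw [hcast j]
          ring
      _ = (Nat.factorial k : ℚ) *
            (if edgeCount (Quotient.out c) = i then 1 else 0) := by
          rw [← Finset.mul_sum,
            binom_identity (k * (k - 1) / 2) (edgeCount (Quotient.out c)) i hi
              (edgeCount_le k _)]
  refine Eq.symm ?_
  unfold hVec
  calc ∑ j ∈ Finset.range (i + 1),
        (-1 : ℚ) ^ (i - j) * ((k * (k - 1) / 2 - j).choose (i - j) : ℚ) * (fVec Φ k j : ℚ)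
      = ∑ j ∈ Finset.range (i + 1),
        ((-1 : ℚ) ^ (i - j) * ((k * (k - 1) / 2 - j).choose (i - j) : ℚ) *
          ∑ c : GraphClass k, a ⟨k, c⟩ * ∑ L ∈ Finset.univ.filter
            (fun L : SimpleGraph (Fin k) => edgeCount L = j),
            (Nat.card {f : (Quotient.out c) →g L // Function.Surjective f} : ℚ)) := by
        refine Finset.sum_congr rfl fun j _ => ?_
        rw [fVec_eq_sum, key1 j]
    _ = ∑ j ∈ Finset.range (i + 1), ∑ c : GraphClass k,
          a ⟨k, c⟩ * ((-1 : ℚ) ^ (i - j) * ((k * (k - 1) / 2 - j).choose (i - j) : ℚ) *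
          ∑ L ∈ Finset.univ.filter
            (fun L : SimpleGraph (Fin k) => edgeCount L = j),
            (Nat.card {f : (Quotient.out c) →g L // Function.Surjective f} : ℚ)) := by
        refine Finset.sum_congr rfl fun j _ => ?_
        rw [Finset.mul_sum]
        exact Finset.sum_congr rfl fun c _ => by ring
    _ = ∑ c : GraphClass k, ∑ j ∈ Finset.range (i + 1),
          a ⟨k, c⟩ * ((-1 : ℚ) ^ (i - j) * ((k * (k - 1) / 2 - j).choose (i - j) : ℚ) *
          ∑ L ∈ Finset.univ.filter
            (fun L : SimpleGraph (Fin k) => edgeCount L = j),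
            (Nat.card {f : (Quotient.out c) →g L // Function.Surjective f} : ℚ)) :=
        Finset.sum_comm
    _ = ∑ c : GraphClass k, a ⟨k, c⟩ * ((Nat.factorial k : ℚ) *
          (if edgeCount (Quotient.out c) = i then 1 else 0)) := by
        refine Finset.sum_congr rfl fun c _ => ?_
        rw [← Finset.mul_sum, key2 c]
    _ = (Nat.factorial k : ℚ) * ∑ c : GraphClass k,
          (if edgeCount (Quotient.out c) = i then a ⟨k, c⟩ else 0) := by
        rw [Finset.mul_sum]
        refine Finset.sum_congr rfl fun c _ => ?_
        split_ifs <;> ring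
end

section
/- Let p be a nonzero univariate polynomial with rational (or real) coefficients that has exactly w nonzero coefficients, where w ≥ 1. Then there exists j ∈ {0,…,w−1} such that the j-th derivative of p does not vanish at −1, i.e., p^{(j)}(−1) ≠ 0. -/
open Polynomial

private lemma coeff_aux (p : Polynomial ℚ) (n k : ℕ) :
    (X * derivative p - C (n : ℚ) * p).coeff k = ((k : ℚ) - n) * p.coeff k := by
  cases k with
  | zero => simp [coeff_X_mul]
  | succ m =>
      simp [coeff_X_mul, coeff_derivative]
      ring

private lemma key (w : ℕ) : ∀ p : Polynomial ℚ, p ≠ 0 → (X + 1) ^ w ∣ p →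
    w < p.support.card := by
  induction w with
  | zero => intro p hp _; simpa [Finset.card_pos, Polynomial.support_eq_empty] using hp
  | succ w ih =>
      intro p hp hdvd
      obtain ⟨q, hq⟩ := hdvd
      set n := p.natTrailingDegree with hn
      by_cases hcard : p.support.card = 1
      · exfalso
        obtain ⟨k, a, ha, rfl⟩ := card_support_eq_one.mp hcard
        have hroot : (C a * X ^ k).eval (-1) = 0 := by
          rw [hq]
          simp
        simp [ha] at hroot
      · set r : Polynomial ℚ := X * derivative p - C (n : ℚ) * p with hr
        have hcoeff : ∀ k, r.coeff k = ((k : ℚ) - n) * p.coeff k := coeff_aux p n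
        have hmemn : n ∈ p.support := natTrailingDegree_mem_support_of_nonzero hp
        -- support of r is contained in support p erase n... we need an element ≠ n
        have h2 : 1 < p.support.card := by
          rcases Nat.lt_or_ge p.support.card 2 with h | h
          · interval_cases h' : p.support.card <;> simp_all
          · exact h
        obtain ⟨k, hk, hkn⟩ : ∃ k ∈ p.support, k ≠ n := by
          have : (p.support.erase n).Nonempty := by
            rw [← Finset.card_pos, Finset.card_erase_of_mem hmemn]
            omega
          obtain ⟨k, hk⟩ := this
          exact ⟨k, Finset.mem_of_mem_erase hk, Finset.ne_of_mem_erase hk⟩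
        have hrne : r ≠ 0 := by
          intro h0
          have := hcoeff k
          rw [h0] at this
          simp only [coeff_zero] at this
          have hkq : ((k : ℚ) - n) ≠ 0 := by
            intro h
            exact hkn (by exact_mod_cast sub_eq_zero.mp h)
          have hpk : p.coeff k ≠ 0 := mem_support_iff.mp hk
          exact hpk (by
            rcases mul_eq_zero.mp this.symm with h | h
            · exact absurd h hkq
            · exact h)
        have hsub : r.support ⊆ p.support.erase n := by
          intro m hm
          rw [mem_support_iff, hcoeff m] at hm
          have : p.coeff m ≠ 0 := fun h => hm (by simp [h])
          have hmn : m ≠ n := by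
            intro h
            subst h
            simp at hm
          exact Finset.mem_erase.mpr ⟨hmn, mem_support_iff.mpr this⟩
        have hdvdr : (X + 1) ^ w ∣ r := by
          refine ⟨X * ((C ((w : ℚ) + 1)) * q + (X + 1) * derivative q) - C (n : ℚ) * ((X + 1) * q), ?_⟩
          rw [hr, hq]
          simp only [derivative_mul, derivative_pow, derivative_add, derivative_X,
            derivative_one, add_zero, mul_one]
          push_cast
          ring
        have := ih r hrne hdvdr
        have hle : r.support.card ≤ p.support.card - 1 := by
          calc r.support.card ≤ (p.support.erase n).card := Finset.card_le_card hsub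
            _ = p.support.card - 1 := Finset.card_erase_of_mem hmemn
        omega

/-- A nonzero polynomial with exactly `w ≥ 1` nonzero coefficients has a derivative of
order `j < w` that does not vanish at `−1`. -/
theorem stmt9 (p : Polynomial ℚ) (hp : p ≠ 0) (w : ℕ)
    (hw : p.support.card = w) (hw1 : 1 ≤ w) :
    ∃ j, j < w ∧ (Polynomial.derivative^[j] p).eval (-1) ≠ 0 := by
  by_contra h
  push_neg at h
  have hroot : ∀ m ≤ w - 1, (derivative^[m] p).IsRoot (-1) := by
    intro m hm
    exact h m (by omega)
  have hlt : w - 1 < p.rootMultiplicity (-1) :=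
    lt_rootMultiplicity_of_isRoot_iterate_derivative hp hroot
  have hdvd : (X - C (-1 : ℚ)) ^ w ∣ p := by
    have := Polynomial.pow_rootMultiplicity_dvd p (-1 : ℚ)
    exact dvd_trans (pow_dvd_pow _ (by omega)) this
  have : (X + 1 : Polynomial ℚ) ^ w ∣ p := by
    simpa [sub_neg_eq_add] using hdvd
  have := key w p hp this
  omega
end

section
/- Let F be a finite simple graph with an edge {u, v} such that u has no false twin in F and v has no false twin in F (i.e., {u} and {v} are singleton blocks of the false-twin partition of F). Then {u, v} is a critical edge of F: for all nonnegative integers x and y, the exploded graph F^{x,y}_{u,v} contains no induced subgraph isomorphic to F. -/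
open SimpleGraph

/-- The vertex type of the exploded graph `H^{x,y}_{u,v}`: the vertices of `H` other than
`u` and `v`, together with `x` copies of `u` and `y` copies of `v`. -/
abbrev ExplodedVertex (V : Type) (u v : V) (x y : ℕ) : Type :=
  {w : V // w ≠ u ∧ w ≠ v} ⊕ (Fin x ⊕ Fin y)

/-- Auxiliary (one-sided) adjacency relation generating the exploded graph. -/
def explodeRel {V : Type} (H : SimpleGraph V) (u v : V) (x y : ℕ) :
    ExplodedVertex V u v x y → ExplodedVertex V u v x y → Prop
  | Sum.inl a, Sum.inl b => H.Adj a.1 b.1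
  | Sum.inl a, Sum.inr (Sum.inl _) => H.Adj a.1 u
  | Sum.inl a, Sum.inr (Sum.inr _) => H.Adj a.1 v
  | _, _ => False

/-- The exploded graph `H^{x,y}_{u,v}`: delete the edge `{u,v}`, replace `u` by `x`
pairwise nonadjacent copies adjacent exactly to the former neighbors of `u` other than
`v`, and replace `v` by `y` pairwise nonadjacent copies adjacent exactly to the former
neighbors of `v` other than `u`. -/
def explode {V : Type} (H : SimpleGraph V) (u v : V) (x y : ℕ) :
    SimpleGraph (ExplodedVertex V u v x y) :=
  SimpleGraph.fromRel (explodeRel H u v x y)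

section Aux

variable {V : Type}

/-- Forward preservation of adjacency along iterates. -/
private lemma aux_fwd {F : SimpleGraph V} {u v : V} {f : V → V}
    (h : ∀ a b, F.Adj a b ↔
      (F.Adj (f a) (f b) ∧ ¬(f a = u ∧ f b = v) ∧ ¬(f a = v ∧ f b = u)))
    (k : ℕ) (a b : V) (hab : F.Adj a b) : F.Adj (f^[k] a) (f^[k] b) := by
  induction k with
  | zero => simpa using hab
  | succ n ih =>
      rw [Function.iterate_succ_apply', Function.iterate_succ_apply']
      exact ((h _ _).mp ih).1

/-- Reflection of adjacency down iterates, when the `b`-orbit avoids `u` and `v`. -/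
private lemma aux_down {F : SimpleGraph V} {u v : V} {f : V → V}
    (h : ∀ a b, F.Adj a b ↔
      (F.Adj (f a) (f b) ∧ ¬(f a = u ∧ f b = v) ∧ ¬(f a = v ∧ f b = u))) :
    ∀ (i : ℕ) (a b : V), (∀ j, 1 ≤ j → j ≤ i → f^[j] b ≠ u ∧ f^[j] b ≠ v) →
      F.Adj (f^[i] a) (f^[i] b) → F.Adj a b := by
  intro i
  induction i with
  | zero => intro a b _ hadj; simpa using hadj
  | succ n ih =>
      intro a b hside hadj
      have h1 : F.Adj (f a) (f b) := by
        apply ih (f a) (f b)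
        · intro j hj1 hj2
          have := hside (j + 1) (by omega) (by omega)
          rw [Function.iterate_succ_apply] at this
          exact this
        · rw [← Function.iterate_succ_apply, ← Function.iterate_succ_apply]
          exact hadj
      have hb := hside 1 le_rfl (by omega)
      refine (h a b).mpr ⟨h1, ?_, ?_⟩
      · rintro ⟨-, hc⟩; exact hb.2 (by simpa using hc)
      · rintro ⟨-, hc⟩; exact hb.1 (by simpa using hc)

/-- A point with a nontrivial period is in the range of `f^[m]`. -/
private lemma aux_peri (f : V → V) (m : ℕ) (w : V) (t : ℕ)
    (ht : 1 ≤ t) (hw : f^[t] w = w) : ∃ z, f^[m] z = w := by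
  have hn : ∀ n, f^[n * t] w = w := by
    intro n
    induction n with
    | zero => simp
    | succ k ih =>
        have e : (k + 1) * t = t + k * t := by ring
        rw [e, Function.iterate_add_apply, ih, hw]
  have hle : m ≤ m * t := Nat.le_mul_of_pos_right m (by omega)
  refine ⟨f^[m * t - m] w, ?_⟩
  rw [← Function.iterate_add_apply, show m + (m * t - m) = m * t by omega, hn m]

end Aux

section Cases

variable {V : Type} (F : SimpleGraph V) (u v : V) (f : V → V)

/-- The case where `u` is in the eventual image and `v` is not. -/
private lemma aux_caseTF
    (hu : ¬ ∃ u', u' ≠ u ∧ ∀ w, F.Adj u' w ↔ F.Adj u w)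
    (hv : ¬ ∃ v', v' ≠ v ∧ ∀ w, F.Adj v' w ↔ F.Adj v w)
    (h : ∀ a b, F.Adj a b ↔
      (F.Adj (f a) (f b) ∧ ¬(f a = u ∧ f b = v) ∧ ¬(f a = v ∧ f b = u)))
    (m : ℕ) (hm1 : 1 ≤ m) (hid : ∀ z, f^[m] (f^[m] z) = f^[m] z)
    (hui : ∃ z, f^[m] z = u) (hvi : ¬ ∃ z, f^[m] z = v) : False := by
  classical
  have iterIu : ∀ t, ∃ z, f^[m] z = f^[t] u := by
    intro t
    obtain ⟨z, hz⟩ := hui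
    refine ⟨f^[t] z, ?_⟩
    rw [← hz, ← Function.iterate_add_apply, ← Function.iterate_add_apply, Nat.add_comm]
  have hnv : ∀ t, 1 ≤ t → f^[t] v ≠ v := fun t ht hw => hvi (aux_peri f m v t ht hw)
  by_cases hs : ∃ s, 1 ≤ s ∧ f^[s] v = u
  · -- u is on the forward orbit of v : twin-propagation argument
    obtain ⟨s, hs1, hsv⟩ := hs
    obtain ⟨m', rfl⟩ : ∃ m', m = m' + 1 := ⟨m - 1, by omega⟩
    have hufix : f^[m' + 1] u = u := by
      obtain ⟨z, hz⟩ := hui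
      rw [← hz, hid]
    have key : ∀ k, k ≤ s → ∀ w, F.Adj (f^[k * m'] u) w ↔ F.Adj (f^[s - k] v) w := by
      intro k
      induction k with
      | zero =>
          intro _ w
          rw [Nat.zero_mul, Nat.sub_zero, hsv]
          simp
      | succ k ih =>
          intro hk1 w
          have twin := ih (by omega)
          have hfA : f (f^[(k + 1) * m'] u) = f^[k * m'] u := by
            have e1 : f (f^[(k + 1) * m'] u) = f^[(k + 1) * m' + 1] u :=
              (Function.iterate_succ_apply' f _ u).symm
            rw [e1, show (k + 1) * m' + 1 = k * m' + (m' + 1) by ring,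
              Function.iterate_add_apply, hufix]
          have hfB : f (f^[s - (k + 1)] v) = f^[s - k] v := by
            have e1 : f (f^[s - (k + 1)] v) = f^[s - (k + 1) + 1] v :=
              (Function.iterate_succ_apply' f _ v).symm
            rw [e1]
            congr 1
            omega
          by_cases heq : f^[k * m'] u = f^[s - k] v
          · rw [h (f^[(k + 1) * m'] u) w, h (f^[s - (k + 1)] v) w, hfA, hfB, heq]
          · by_cases hAu : f^[k * m'] u = u
            · refine absurd ⟨f^[s - k] v, ?_, fun w' => (twin w').symm.trans ?_⟩ hu
              · exact fun hh => heq (hAu.trans hh.symm)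
              · rw [hAu]
            · by_cases hBu : f^[s - k] v = u
              · refine absurd ⟨f^[k * m'] u, hAu, fun w' => (twin w').trans ?_⟩ hu
                rw [hBu]
              · by_cases hAv : f^[k * m'] u = v
                · exact absurd (by rw [← hAv]; exact iterIu _) hvi
                · by_cases hBv : f^[s - k] v = v
                  · exact absurd (aux_peri f (m' + 1) v (s - k) (by omega) hBv) hvi
                  · rw [h (f^[(k + 1) * m'] u) w, h (f^[s - (k + 1)] v) w, hfA, hfB]
                    constructor
                    · rintro ⟨h1, -, -⟩
                      exact ⟨(twin (f w)).mp h1, fun hc => hBu hc.1, fun hc => hBv hc.1⟩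
                    · rintro ⟨h1, -, -⟩
                      exact ⟨(twin (f w)).mpr h1, fun hc => hAu hc.1, fun hc => hAv hc.1⟩
    refine absurd ⟨f^[s * m'] u, ?_, fun w => ?_⟩ hv
    · exact fun hh => hvi (by rw [← hh]; exact iterIu _)
    · have := key s le_rfl w
      simpa using this
  · -- u is not on the forward orbit of v : f^[m] v is a false twin of v
    push_neg at hs
    have hnu : ∀ t, 1 ≤ t → f^[t] v ≠ u := fun t ht => hs t ht
    have hside : ∀ j, 1 ≤ j → j ≤ m → f^[j] (f^[m] v) ≠ u ∧ f^[j] (f^[m] v) ≠ v := by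
      intro j hj1 _
      rw [← Function.iterate_add_apply]
      exact ⟨hnu (j + m) (by omega), hnv (j + m) (by omega)⟩
    have c1 : ∀ w, F.Adj v w → F.Adj (f^[m] v) w := by
      intro w hw
      have h2 := aux_fwd h m w v hw.symm
      have : F.Adj (f^[m] w) (f^[m] (f^[m] v)) := by rw [hid]; exact h2
      exact (aux_down h m w (f^[m] v) hside this).symm
    have c2 : ∀ w, F.Adj (f^[m] v) w → F.Adj v w := by
      intro w hw
      have h2 := aux_fwd h m w (f^[m] v) hw.symm
      rw [hid] at h2
      refine (aux_down h m w v ?_ h2).symm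
      intro j hj1 hj2
      exact ⟨hnu j hj1, hnv j hj1⟩
    refine absurd ⟨f^[m] v, fun hh => hvi ⟨v, hh⟩, fun w => ⟨c2 w, c1 w⟩⟩ hv

/-- Half of the case where neither `u` nor `v` is in the eventual image:
the orbit of `v` must pass through `u`. -/
private lemma aux_caseFFhalf
    (hv : ¬ ∃ v', v' ≠ v ∧ ∀ w, F.Adj v' w ↔ F.Adj v w)
    (h : ∀ a b, F.Adj a b ↔
      (F.Adj (f a) (f b) ∧ ¬(f a = u ∧ f b = v) ∧ ¬(f a = v ∧ f b = u)))
    (m : ℕ) (hm1 : 1 ≤ m) (hid : ∀ z, f^[m] (f^[m] z) = f^[m] z)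
    (hui : ¬ ∃ z, f^[m] z = u) (hvi : ¬ ∃ z, f^[m] z = v) :
    ∃ j, 1 ≤ j ∧ f^[j] v = u := by
  classical
  have hIiter : ∀ t, ∃ z, f^[m] z = f^[t] (f^[m] v) := by
    intro t
    refine ⟨f^[t] v, ?_⟩
    rw [← Function.iterate_add_apply, ← Function.iterate_add_apply, Nat.add_comm]
  have hside : ∀ j, 1 ≤ j → j ≤ m → f^[j] (f^[m] v) ≠ u ∧ f^[j] (f^[m] v) ≠ v := by
    intro j _ _
    constructor
    · exact fun hh => hui (by rw [← hh]; exact hIiter j)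
    · exact fun hh => hvi (by rw [← hh]; exact hIiter j)
  have c1 : ∀ w, F.Adj w v → F.Adj w (f^[m] v) := by
    intro w hw
    have h2 := aux_fwd h m w v hw
    have : F.Adj (f^[m] w) (f^[m] (f^[m] v)) := by rw [hid]; exact h2
    exact aux_down h m w (f^[m] v) hside this
  by_cases hrev : ∀ w, F.Adj w (f^[m] v) → F.Adj w v
  · refine absurd ⟨f^[m] v, fun hh => hvi ⟨v, hh⟩, fun w => ?_⟩ hv
    exact ⟨fun hw => (hrev w hw.symm).symm, fun hw => (c1 w hw.symm).symm⟩
  · push_neg at hrev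
    obtain ⟨w₁, hw1, hw1'⟩ := hrev
    set P : ℕ → Prop := fun j => F.Adj (f^[j] w₁) (f^[j] v) with hP
    have hPm : P m := by
      have := aux_fwd h m w₁ (f^[m] v) hw1
      rw [hid] at this
      exact this
    have hEx : ∃ j, P j := ⟨m, hPm⟩
    have hP0 : ¬ P 0 := by simpa [hP] using hw1'
    set j := Nat.find hEx with hj
    have hPj : P j := Nat.find_spec hEx
    have hj1 : 1 ≤ j := by
      rcases Nat.eq_zero_or_pos j with h0 | h0
      · exact absurd (h0 ▸ hPj) hP0
      · omega
    have hPpred : ¬ P (j - 1) := Nat.find_min hEx (by omega)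
    have hA : f (f^[j - 1] w₁) = f^[j] w₁ := by
      have e1 : f (f^[j - 1] w₁) = f^[j - 1 + 1] w₁ :=
        (Function.iterate_succ_apply' f _ w₁).symm
      rw [e1]
      congr 1
      omega
    have hB : f (f^[j - 1] v) = f^[j] v := by
      have e1 : f (f^[j - 1] v) = f^[j - 1 + 1] v :=
        (Function.iterate_succ_apply' f _ v).symm
      rw [e1]
      congr 1
      omega
    have := h (f^[j - 1] w₁) (f^[j - 1] v)
    rw [hA, hB] at this
    have hnadj : ¬ (F.Adj (f^[j] w₁) (f^[j] v) ∧
        ¬(f^[j] w₁ = u ∧ f^[j] v = v) ∧ ¬(f^[j] w₁ = v ∧ f^[j] v = u)) := by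
      intro hc
      exact hPpred (this.mpr hc)
    by_cases hc1 : f^[j] w₁ = u ∧ f^[j] v = v
    · exact absurd (aux_peri f m v j hj1 hc1.2) hvi
    · by_cases hc2 : f^[j] w₁ = v ∧ f^[j] v = u
      · exact ⟨j, hj1, hc2.2⟩
      · exact absurd ⟨hPj, hc1, hc2⟩ hnadj

end Cases

section Main

variable {V : Type} [Fintype V]

private lemma aux_noFunc (F : SimpleGraph V) (u v : V) (huv : F.Adj u v)
    (hu : ¬ ∃ u', u' ≠ u ∧ ∀ w, F.Adj u' w ↔ F.Adj u w)
    (hv : ¬ ∃ v', v' ≠ v ∧ ∀ w, F.Adj v' w ↔ F.Adj v w)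
    (f : V → V)
    (h : ∀ a b, F.Adj a b ↔
      (F.Adj (f a) (f b) ∧ ¬(f a = u ∧ f b = v) ∧ ¬(f a = v ∧ f b = u))) :
    False := by
  classical
  -- find an "idempotent" iterate f^[m]
  obtain ⟨m, hm1, hid⟩ : ∃ m, 1 ≤ m ∧ ∀ z, f^[m] (f^[m] z) = f^[m] z := by
    obtain ⟨a, b, hne, heq⟩ := Finite.exists_ne_map_eq_of_infinite (fun n : ℕ => f^[n])
    wlog hab : a < b generalizing a b
    · exact this b a hne.symm heq.symm (by omega)
    set p := b - a with hpdef
    have hp1 : 1 ≤ p := by omega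
    have key : ∀ t, f^[a + t + p] = f^[a + t] := by
      intro t
      calc f^[a + t + p] = f^[t + b] := by rw [show a + t + p = t + b by omega]
        _ = f^[t] ∘ f^[b] := Function.iterate_add f t b
        _ = f^[t] ∘ f^[a] := by rw [← heq]
        _ = f^[t + a] := (Function.iterate_add f t a).symm
        _ = f^[a + t] := by rw [Nat.add_comm]
    have key2 : ∀ n t, f^[a + t + n * p] = f^[a + t] := by
      intro n
      induction n with
      | zero => intro t; simp
      | succ k ih =>
          intro t
          rw [show a + t + (k + 1) * p = a + (t + k * p) + p by ring, key (t + k * p),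
            show a + (t + k * p) = a + t + k * p by ring, ih t]
    have hma : a ≤ (a + 1) * p := by
      have := Nat.mul_le_mul_left (a + 1) hp1
      omega
    have hmm : f^[(a + 1) * p + (a + 1) * p] = f^[(a + 1) * p] := by
      rw [show (a + 1) * p + (a + 1) * p = a + ((a + 1) * p - a) + (a + 1) * p by omega,
        key2 (a + 1) ((a + 1) * p - a), show a + ((a + 1) * p - a) = (a + 1) * p by omega]
    refine ⟨(a + 1) * p, by nlinarith, fun z => ?_⟩
    rw [← Function.iterate_add_apply, hmm]
  have hswap : ∀ a b, F.Adj a b ↔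
      (F.Adj (f a) (f b) ∧ ¬(f a = v ∧ f b = u) ∧ ¬(f a = u ∧ f b = v)) := by
    intro a b
    rw [h a b]
    tauto
  by_cases hui : ∃ z, f^[m] z = u <;> by_cases hvi : ∃ z, f^[m] z = v
  · -- both u and v are in the eventual image
    obtain ⟨zu, hzu⟩ := hui
    obtain ⟨zv, hzv⟩ := hvi
    set a := f^[m - 1] (f^[m] zu) with hadef
    set b := f^[m - 1] (f^[m] zv) with hbdef
    have hfa : f a = u := by
      have e1 : f (f^[m - 1] (f^[m] zu)) = f^[m - 1 + 1] (f^[m] zu) :=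
        (Function.iterate_succ_apply' f _ _).symm
      rw [hadef, e1, show m - 1 + 1 = m by omega, hid, hzu]
    have hfb : f b = v := by
      have e1 : f (f^[m - 1] (f^[m] zv)) = f^[m - 1 + 1] (f^[m] zv) :=
        (Function.iterate_succ_apply' f _ _).symm
      rw [hbdef, e1, show m - 1 + 1 = m by omega, hid, hzv]
    have hIa : f^[m] a = a := by
      rw [hadef]
      calc f^[m] (f^[m - 1] (f^[m] zu)) = f^[m + (m - 1)] (f^[m] zu) :=
            (Function.iterate_add_apply f m (m - 1) _).symm
        _ = f^[(m - 1) + m] (f^[m] zu) := by rw [Nat.add_comm]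
        _ = f^[m - 1] (f^[m] (f^[m] zu)) := Function.iterate_add_apply f (m - 1) m _
        _ = f^[m - 1] (f^[m] zu) := by rw [hid]
    have hIb : f^[m] b = b := by
      rw [hbdef]
      calc f^[m] (f^[m - 1] (f^[m] zv)) = f^[m + (m - 1)] (f^[m] zv) :=
            (Function.iterate_add_apply f m (m - 1) _).symm
        _ = f^[(m - 1) + m] (f^[m] zv) := by rw [Nat.add_comm]
        _ = f^[m - 1] (f^[m] (f^[m] zv)) := Function.iterate_add_apply f (m - 1) m _
        _ = f^[m - 1] (f^[m] zv) := by rw [hid]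
    have hadj : F.Adj a b := by
      have h1 : F.Adj (f a) (f b) := by rw [hfa, hfb]; exact huv
      have h2 := aux_fwd h (m - 1) (f a) (f b) h1
      have e2 : f^[m - 1] (f a) = f^[m - 1 + 1] a := (Function.iterate_succ_apply f (m - 1) a).symm
      have e3 : f^[m - 1] (f b) = f^[m - 1 + 1] b := (Function.iterate_succ_apply f (m - 1) b).symm
      rw [e2, e3, show m - 1 + 1 = m by omega, hIa, hIb] at h2
      exact h2
    exact ((h a b).mp hadj).2.1 ⟨hfa, hfb⟩
  · exact aux_caseTF F u v f hu hv h m hm1 hid hui hvi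
  · exact aux_caseTF F v u f hv hu hswap m hm1 hid hvi hui
  · obtain ⟨j, hj1, hjv⟩ := aux_caseFFhalf F u v f hv h m hm1 hid hui hvi
    obtain ⟨j', hj1', hju⟩ := aux_caseFFhalf F v u f hu hswap m hm1 hid hvi hui
    have : f^[j' + j] v = v := by
      rw [Function.iterate_add_apply, hjv, hju]
    exact hvi (aux_peri f m v (j' + j) (by omega) this)

end Main

private def projEV {V : Type} (u v : V) (x y : ℕ) : ExplodedVertex V u v x y → V :=
  Sum.elim Subtype.val (Sum.elim (fun _ => u) (fun _ => v))

private lemma explode_adj_iff {V : Type} (F : SimpleGraph V) (u v : V) (x y : ℕ)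
    (s t : ExplodedVertex V u v x y) :
    (explode F u v x y).Adj s t ↔
      (F.Adj (projEV u v x y s) (projEV u v x y t) ∧
        ¬(projEV u v x y s = u ∧ projEV u v x y t = v) ∧
        ¬(projEV u v x y s = v ∧ projEV u v x y t = u)) := by
  rcases s with ⟨a, ha1, ha2⟩ | (i | i) <;> rcases t with ⟨b, hb1, hb2⟩ | (j | j) <;>
    simp only [explode, SimpleGraph.fromRel_adj, explodeRel, projEV, Sum.elim_inl,
      Sum.elim_inr, ne_eq, Sum.inl.injEq, Sum.inr.injEq, Subtype.mk.injEq]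
  · constructor
    · rintro ⟨hne', h1 | h1⟩
      · exact ⟨h1, fun hc => ha1 hc.1, fun hc => ha2 hc.1⟩
      · exact ⟨h1.symm, fun hc => ha1 hc.1, fun hc => ha2 hc.1⟩
    · rintro ⟨h1, -, -⟩
      exact ⟨F.ne_of_adj h1, Or.inl h1⟩
  · constructor
    · rintro ⟨-, h1 | h1⟩
      · exact ⟨h1, fun hc => ha1 hc.1, fun hc => ha2 hc.1⟩
      · exact h1.elim
    · rintro ⟨h1, -, -⟩
      exact ⟨fun hh => Sum.inl_ne_inr hh, Or.inl h1⟩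
  · constructor
    · rintro ⟨-, h1 | h1⟩
      · exact ⟨h1, fun hc => ha1 hc.1, fun hc => ha2 hc.1⟩
      · exact h1.elim
    · rintro ⟨h1, -, -⟩
      exact ⟨fun hh => Sum.inl_ne_inr hh, Or.inl h1⟩
  · constructor
    · rintro ⟨-, h1 | h1⟩
      · exact h1.elim
      · exact ⟨h1.symm, fun hc => hb2 hc.2, fun hc => hb1 hc.2⟩
    · rintro ⟨h1, -, -⟩
      exact ⟨fun hh => Sum.inr_ne_inl hh, Or.inr h1.symm⟩
  · constructor
    · rintro ⟨-, h1 | h1⟩ <;> exact h1.elim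
    · rintro ⟨h1, -, -⟩
      exact absurd h1 (F.irrefl)
  · constructor
    · rintro ⟨-, h1 | h1⟩ <;> exact h1.elim
    · rintro ⟨-, h2, -⟩
      exact absurd ⟨trivial, trivial⟩ h2
  · constructor
    · rintro ⟨-, h1 | h1⟩
      · exact h1.elim
      · exact ⟨h1.symm, fun hc => hb2 hc.2, fun hc => hb1 hc.2⟩
    · rintro ⟨h1, -, -⟩
      exact ⟨fun hh => Sum.inr_ne_inl hh, Or.inr h1.symm⟩
  · constructor
    · rintro ⟨-, h1 | h1⟩ <;> exact h1.elim
    · rintro ⟨-, -, h3⟩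
      exact absurd ⟨trivial, trivial⟩ h3
  · constructor
    · rintro ⟨-, h1 | h1⟩ <;> exact h1.elim
    · rintro ⟨h1, -, -⟩
      exact absurd h1 (F.irrefl)

/-- If `{u,v}` is an edge of `F` and neither `u` nor `v` has a false twin in `F`, then
`{u,v}` is a critical edge: no explosion `F^{x,y}_{u,v}` contains an induced subgraph
isomorphic to `F`. -/
theorem stmt16 {V : Type} [Fintype V] (F : SimpleGraph V) (u v : V) (huv : F.Adj u v)
    (hu : ¬ ∃ u', u' ≠ u ∧ ∀ w, F.Adj u' w ↔ F.Adj u w)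
    (hv : ¬ ∃ v', v' ≠ v ∧ ∀ w, F.Adj v' w ↔ F.Adj v w)
    (x y : ℕ) :
    ¬ ∃ S : Set (ExplodedVertex V u v x y),
        Nonempty (((explode F u v x y).induce S) ≃g F) := by
  classical
  rintro ⟨S, ⟨e⟩⟩
  have hmain : ∀ a b, F.Adj a b ↔
      (F.Adj (projEV u v x y (e.symm a).val) (projEV u v x y (e.symm b).val) ∧
        ¬(projEV u v x y (e.symm a).val = u ∧ projEV u v x y (e.symm b).val = v) ∧
        ¬(projEV u v x y (e.symm a).val = v ∧ projEV u v x y (e.symm b).val = u)) := by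
    intro a b
    have h1 : F.Adj a b ↔
        ((explode F u v x y).induce S).Adj (e.symm a) (e.symm b) :=
      (SimpleGraph.Iso.map_adj_iff e.symm).symm
    have h2 : ((explode F u v x y).induce S).Adj (e.symm a) (e.symm b) ↔
        (explode F u v x y).Adj (e.symm a).val (e.symm b).val := Iff.rfl
    rw [h1, h2, explode_adj_iff F u v x y]
  exact aux_noFunc F u v huv hu hv (fun w => projEV u v x y (e.symm w).val) hmain
end

section
/- Let H be a finite simple graph with at least 2 vertices. Then H has a critical edge or the complement graph H̄ has a critical edge; that is, there exist a graph F ∈ {H, H̄} and an edge {u,v} ∈ E(F) such that for all nonnegative integers x and y, the exploded graph F^{x,y}_{u,v} contains no induced subgraph isomorphic to F. -/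
open SimpleGraph

/-! ### Auxiliary definitions and lemmas -/

/-- The original vertex of which a clone is a copy. -/
def cloneBase {V : Type} (u v : V) {x y : ℕ} (c : Fin x ⊕ Fin y) : V :=
  Sum.elim (fun _ => u) (fun _ => v) c

/-- Projection of an exploded vertex back to `V`. -/
def eproj {V : Type} (u v : V) {x y : ℕ} : ExplodedVertex V u v x y → V
  | Sum.inl a => a.1
  | Sum.inr c => cloneBase u v c

@[simp] lemma eproj_inl {V : Type} (u v : V) {x y : ℕ} (a : {w : V // w ≠ u ∧ w ≠ v}) :
    eproj u v (Sum.inl a : ExplodedVertex V u v x y) = a.1 := rfl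

@[simp] lemma eproj_inr {V : Type} (u v : V) {x y : ℕ} (c : Fin x ⊕ Fin y) :
    eproj u v (Sum.inr c : ExplodedVertex V u v x y) = cloneBase u v c := rfl

lemma explode_adj_inl_inl {V : Type} (F : SimpleGraph V) (u v : V) (x y : ℕ)
    (a b : {w : V // w ≠ u ∧ w ≠ v}) :
    (explode F u v x y).Adj (Sum.inl a) (Sum.inl b) ↔ F.Adj a.1 b.1 := by
  rw [explode, fromRel_adj]
  constructor
  · rintro ⟨hne, h | h⟩
    · exact h
    · exact h.symm
  · intro h
    refine ⟨fun e => h.ne (congrArg Subtype.val (Sum.inl.inj e)), Or.inl h⟩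

lemma explode_adj_inl_inr {V : Type} (F : SimpleGraph V) (u v : V) (x y : ℕ)
    (a : {w : V // w ≠ u ∧ w ≠ v}) (c : Fin x ⊕ Fin y) :
    (explode F u v x y).Adj (Sum.inl a) (Sum.inr c) ↔ F.Adj a.1 (cloneBase u v c) := by
  rw [explode, fromRel_adj]
  cases c with
  | inl i =>
      constructor
      · rintro ⟨hne, h | h⟩
        · exact h
        · exact h.elim
      · intro h
        exact ⟨fun e => by simp at e, Or.inl h⟩
  | inr j =>
      constructor
      · rintro ⟨hne, h | h⟩
        · exact h
        · exact h.elim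
      · intro h
        exact ⟨fun e => by simp at e, Or.inl h⟩

lemma explode_adj_inr_inl {V : Type} (F : SimpleGraph V) (u v : V) (x y : ℕ)
    (a : {w : V // w ≠ u ∧ w ≠ v}) (c : Fin x ⊕ Fin y) :
    (explode F u v x y).Adj (Sum.inr c) (Sum.inl a) ↔ F.Adj a.1 (cloneBase u v c) := by
  rw [adj_comm]
  exact explode_adj_inl_inr F u v x y a c

lemma explode_not_adj_inr {V : Type} (F : SimpleGraph V) (u v : V) (x y : ℕ)
    (c d : Fin x ⊕ Fin y) :
    ¬ (explode F u v x y).Adj (Sum.inr c) (Sum.inr d) := by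
  rw [explode, fromRel_adj]
  rintro ⟨hne, h | h⟩
  · cases c <;> cases d <;> exact h
  · cases c <;> cases d <;> exact h

/-- Deleting the edge `{u,v}` does not affect adjacency of pairs where one vertex
avoids `u` and `v`. -/
lemma deleteEdge_adj_of_ne {V : Type} (F : SimpleGraph V) {u v a : V} (b : V)
    (ha : a ≠ u) (ha' : a ≠ v) :
    (F.deleteEdges {s(u,v)}).Adj a b ↔ F.Adj a b := by
  rw [deleteEdges_adj]
  constructor
  · exact And.left
  · intro h
    refine ⟨h, ?_⟩
    intro hmem
    rw [Set.mem_singleton_iff, Sym2.eq_iff] at hmem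
    rcases hmem with ⟨rfl, rfl⟩ | ⟨rfl, rfl⟩
    · exact ha rfl
    · exact ha' rfl

lemma deleteEdge_not_adj {V : Type} (F : SimpleGraph V) (u v : V) :
    ¬ (F.deleteEdges {s(u,v)}).Adj u v := by
  rw [deleteEdges_adj]
  rintro ⟨-, h⟩
  exact h rfl

lemma deleteEdge_not_adj' {V : Type} (F : SimpleGraph V) (u v : V) :
    ¬ (F.deleteEdges {s(u,v)}).Adj v u := by
  rw [adj_comm]
  exact deleteEdge_not_adj F u v

/-- A graph with an edge does not embed into itself minus that edge. -/
lemma no_emb_deleteEdge {V : Type} [Fintype V] (F : SimpleGraph V) {u v : V}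
    (huv : F.Adj u v) : ¬ Nonempty (F ↪g F.deleteEdges {s(u,v)}) := by
  classical
  rintro ⟨g⟩
  haveI : Fintype (F.edgeSet) := Fintype.ofFinite _
  haveI : Fintype ((F.deleteEdges {s(u,v)}).edgeSet) := Fintype.ofFinite _
  have h1 : Fintype.card F.edgeSet ≤ Fintype.card (F.deleteEdges {s(u,v)}).edgeSet :=
    Fintype.card_le_of_embedding g.mapEdgeSet
  have h2 : Fintype.card (F.deleteEdges {s(u,v)}).edgeSet < Fintype.card F.edgeSet := by
    apply Set.card_lt_card
    rw [edgeSet_deleteEdges]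
    refine (Set.ssubset_iff_of_subset Set.diff_subset).mpr ?_
    exact ⟨s(u,v), F.mem_edgeSet.mpr huv, fun h => h.2 rfl⟩
  omega

/-- If `F` has no pair of distinct vertices with identical adjacency ("false twins"),
then no explosion of an edge of `F` contains a copy of `F`. -/
lemma crit_of_no_false_twins {V : Type} [Fintype V] (F : SimpleGraph V) {u v : V}
    (huv : F.Adj u v)
    (hnt : ∀ p q : V, (∀ z, F.Adj p z ↔ F.Adj q z) → p = q) (x y : ℕ) :
    ¬ Nonempty (F ↪g explode F u v x y) := by
  rintro ⟨f⟩
  have key : ∀ (p q : V) (c₁ c₂ : Fin x ⊕ Fin y), f p = Sum.inr c₁ → f q = Sum.inr c₂ →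
      cloneBase u v c₁ = cloneBase u v c₂ → p = q := by
    intro p q c₁ c₂ hp hq hbase
    apply hnt
    intro z
    rw [← f.map_rel_iff (a := p) (b := z), ← f.map_rel_iff (a := q) (b := z), hp, hq]
    rcases hz : f z with a | d
    · rw [explode_adj_inr_inl, explode_adj_inr_inl, hbase]
    · exact iff_of_false (explode_not_adj_inr F u v x y c₁ d)
        (explode_not_adj_inr F u v x y c₂ d)
  let g : V → V := fun w => eproj u v (f w)
  have hginj : Function.Injective g := by
    intro w₁ w₂ h
    have h' : eproj u v (f w₁) = eproj u v (f w₂) := h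
    rcases h1 : f w₁ with a₁ | c₁ <;> rcases h2 : f w₂ with a₂ | c₂ <;>
      rw [h1, h2] at h' <;> simp only [eproj_inl, eproj_inr] at h'
    · apply f.injective
      rw [h1, h2, Subtype.ext h']
    · exact absurd h' (by cases c₂ with
        | inl _ => exact a₁.2.1
        | inr _ => exact a₁.2.2)
    · exact absurd h'.symm (by cases c₁ with
        | inl _ => exact a₂.2.1
        | inr _ => exact a₂.2.2)
    · exact key w₁ w₂ c₁ c₂ h1 h2 h'
  have hrel : ∀ w₁ w₂ : V,
      (F.deleteEdges {s(u,v)}).Adj (g w₁) (g w₂) ↔ F.Adj w₁ w₂ := by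
    intro w₁ w₂
    rw [← f.map_rel_iff (a := w₁) (b := w₂)]
    show (F.deleteEdges {s(u,v)}).Adj (eproj u v (f w₁)) (eproj u v (f w₂)) ↔ _
    rcases h1 : f w₁ with a₁ | c₁ <;> rcases h2 : f w₂ with a₂ | c₂ <;>
      simp only [eproj_inl, eproj_inr]
    · rw [deleteEdge_adj_of_ne F _ a₁.2.1 a₁.2.2, explode_adj_inl_inl]
    · rw [deleteEdge_adj_of_ne F _ a₁.2.1 a₁.2.2, explode_adj_inl_inr]
    · rw [adj_comm, deleteEdge_adj_of_ne F _ a₂.2.1 a₂.2.2, adj_comm,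
        explode_adj_inr_inl]
      exact F.adj_comm _ _
    · refine iff_of_false ?_ (explode_not_adj_inr F u v x y c₁ c₂)
      intro had
      rcases c₁ with i₁ | j₁ <;> rcases c₂ with i₂ | j₂ <;>
        simp only [cloneBase, Sum.elim_inl, Sum.elim_inr] at had
      · exact F.irrefl (((deleteEdges_adj).mp had).1)
      · exact deleteEdge_not_adj F u v had
      · exact deleteEdge_not_adj' F u v had
      · exact F.irrefl (((deleteEdges_adj).mp had).1)
  exact no_emb_deleteEdge F huv ⟨⟨⟨g, hginj⟩, fun {w₁ w₂} => hrel w₁ w₂⟩⟩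

/-- Transfer an exploded vertex to the exploded graph of the vertex-deleted subgraph,
assuming it is not (the copy of) the deleted vertex `r`. -/
def descendVert {V : Type} {u v r : V} {x y : ℕ} (hur : u ≠ r) (hvr : v ≠ r) :
    (z : ExplodedVertex V u v x y) →
    (∀ a : {w : V // w ≠ u ∧ w ≠ v}, z = Sum.inl a → a.1 ≠ r) →
    ExplodedVertex {w : V // w ≠ r} (⟨u, hur⟩ : {w : V // w ≠ r}) ⟨v, hvr⟩ x y
  | Sum.inl a, hz => Sum.inl ⟨⟨a.1, hz a rfl⟩,
      fun h => a.2.1 (congrArg Subtype.val h),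
      fun h => a.2.2 (congrArg Subtype.val h)⟩
  | Sum.inr c, _ => Sum.inr c

lemma descendVert_eq_inl {V : Type} {u v r : V} {x y : ℕ} (hur : u ≠ r) (hvr : v ≠ r)
    {z : ExplodedVertex V u v x y}
    {hz : ∀ a : {w : V // w ≠ u ∧ w ≠ v}, z = Sum.inl a → a.1 ≠ r}
    {a : {w : V // w ≠ u ∧ w ≠ v}} (h : z = Sum.inl a)
    (p1 : a.1 ≠ r) (p2 : (⟨a.1, p1⟩ : {w : V // w ≠ r}) ≠ ⟨u, hur⟩)
    (p3 : (⟨a.1, p1⟩ : {w : V // w ≠ r}) ≠ ⟨v, hvr⟩) :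
    descendVert hur hvr z hz = Sum.inl ⟨⟨a.1, p1⟩, p2, p3⟩ := by
  subst h; rfl

lemma descendVert_eq_inr {V : Type} {u v r : V} {x y : ℕ} (hur : u ≠ r) (hvr : v ≠ r)
    {z : ExplodedVertex V u v x y}
    {hz : ∀ a : {w : V // w ≠ u ∧ w ≠ v}, z = Sum.inl a → a.1 ≠ r}
    {c : Fin x ⊕ Fin y} (h : z = Sum.inr c) :
    descendVert hur hvr z hz = Sum.inr c := by
  subst h; rfl

lemma cloneBase_descend {V : Type} {u v r : V} (hur : u ≠ r) (hvr : v ≠ r)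
    {x y : ℕ} (c : Fin x ⊕ Fin y) :
    (cloneBase (⟨u, hur⟩ : {w : V // w ≠ r}) ⟨v, hvr⟩ c).1 = cloneBase u v c := by
  cases c <;> rfl

lemma descendVert_inj {V : Type} {u v r : V} {x y : ℕ} (hur : u ≠ r) (hvr : v ≠ r)
    {z₁ z₂ : ExplodedVertex V u v x y}
    {hz₁ : ∀ a : {w : V // w ≠ u ∧ w ≠ v}, z₁ = Sum.inl a → a.1 ≠ r}
    {hz₂ : ∀ a : {w : V // w ≠ u ∧ w ≠ v}, z₂ = Sum.inl a → a.1 ≠ r}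
    (h : descendVert hur hvr z₁ hz₁ = descendVert hur hvr z₂ hz₂) : z₁ = z₂ := by
  cases z₁ with
  | inl a₁ =>
      cases z₂ with
      | inl a₂ =>
          simp only [descendVert, Sum.inl.injEq, Subtype.mk.injEq] at h
          exact congrArg Sum.inl (Subtype.ext h)
      | inr c₂ => exact absurd h (by simp [descendVert])
  | inr c₁ =>
      cases z₂ with
      | inl a₂ => exact absurd h (by simp [descendVert])
      | inr c₂ =>
          simp only [descendVert, Sum.inr.injEq] at h
          exact congrArg Sum.inr h

lemma descendVert_adj {V : Type} (F : SimpleGraph V) {u v r : V}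
    (hur : u ≠ r) (hvr : v ≠ r) {x y : ℕ}
    (z₁ z₂ : ExplodedVertex V u v x y)
    (hz₁ : ∀ a : {w : V // w ≠ u ∧ w ≠ v}, z₁ = Sum.inl a → a.1 ≠ r)
    (hz₂ : ∀ a : {w : V // w ≠ u ∧ w ≠ v}, z₂ = Sum.inl a → a.1 ≠ r) :
    (explode (SimpleGraph.comap Subtype.val F : SimpleGraph {w : V // w ≠ r})
        ⟨u, hur⟩ ⟨v, hvr⟩ x y).Adj
      (descendVert hur hvr z₁ hz₁) (descendVert hur hvr z₂ hz₂)
      ↔ (explode F u v x y).Adj z₁ z₂ := by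
  cases z₁ with
  | inl a₁ =>
      cases z₂ with
      | inl a₂ =>
          simp only [descendVert]
          rw [explode_adj_inl_inl, explode_adj_inl_inl]
          exact Iff.rfl
      | inr c₂ =>
          simp only [descendVert]
          rw [explode_adj_inl_inr, explode_adj_inl_inr]
          show F.Adj _ ((cloneBase (⟨u, hur⟩ : {w : V // w ≠ r}) ⟨v, hvr⟩ c₂).1) ↔ _
          rw [cloneBase_descend hur hvr c₂]
  | inr c₁ =>
      cases z₂ with
      | inl a₂ =>
          simp only [descendVert]
          rw [explode_adj_inr_inl, explode_adj_inr_inl]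
          show F.Adj _ ((cloneBase (⟨u, hur⟩ : {w : V // w ≠ r}) ⟨v, hvr⟩ c₁).1) ↔ _
          rw [cloneBase_descend hur hvr c₁]
      | inr c₂ =>
          simp only [descendVert]
          exact iff_of_false (explode_not_adj_inr _ _ _ x y c₁ c₂)
            (explode_not_adj_inr F u v x y c₁ c₂)

/-- If `u` and `v` are adjacent true twins of `F`, then no explosion of the edge `{u,v}`
contains a copy of `F`.  (Stated with an auxiliary cardinality bound for induction.) -/
lemma crit_of_true_twins : ∀ (n : ℕ) (V : Type) (_ : Fintype V) (F : SimpleGraph V)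
    (u v : V), Fintype.card V ≤ n → F.Adj u v →
    (∀ w, w ≠ u → w ≠ v → (F.Adj w u ↔ F.Adj w v)) →
    ∀ (x y : ℕ), ¬ Nonempty (F ↪g explode F u v x y) := by
  intro n
  induction n with
  | zero =>
      intro V instV F u v hc huv htw x y
      exfalso
      have : Fintype.card V = 0 := Nat.le_antisymm hc (Nat.zero_le _)
      exact (Fintype.card_eq_zero_iff.mp this).elim u
  | succ n ih =>
      intro V instV F u v hc huv htw x y
      rintro ⟨f⟩
      classical
      by_cases hR : ∃ r : V, r ≠ u ∧ r ≠ v ∧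
          ∀ (p : V) (a : {w : V // w ≠ u ∧ w ≠ v}), ¬ (f p = Sum.inl a ∧ a.1 = r)
      · -- some vertex `r` outside `{u,v}` is unused: delete it and recurse
        obtain ⟨r, hru, hrv, hr⟩ := hR
        have hur : u ≠ r := Ne.symm hru
        have hvr : v ≠ r := Ne.symm hrv
        set V' := {w : V // w ≠ r} with hV'
        set u' : V' := ⟨u, hur⟩ with hu'
        set v' : V' := ⟨v, hvr⟩ with hv'
        set F' : SimpleGraph V' := SimpleGraph.comap Subtype.val F with hF'
        have hfne : ∀ (w : V) (a : {w : V // w ≠ u ∧ w ≠ v}),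
            f w = Sum.inl a → a.1 ≠ r := by
          intro w a hfa hav
          exact hr w a ⟨hfa, hav⟩
        -- build the embedding F' ↪g explode F' u' v' x y
        let g : V' → ExplodedVertex V' u' v' x y :=
          fun w => descendVert hur hvr (f w.1) (fun a ha => hfne w.1 a ha)
        have hginj : Function.Injective g := by
          intro w₁ w₂ h
          have h' : descendVert hur hvr (f w₁.1) (fun a ha => hfne w₁.1 a ha)
              = descendVert hur hvr (f w₂.1) (fun a ha => hfne w₂.1 a ha) := h
          exact Subtype.ext (f.injective (descendVert_inj hur hvr h'))
        have hgrel : ∀ w₁ w₂ : V',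
            (explode F' u' v' x y).Adj (g w₁) (g w₂) ↔ F'.Adj w₁ w₂ := by
          intro w₁ w₂
          have hcomap : F'.Adj w₁ w₂ ↔ F.Adj w₁.1 w₂.1 := Iff.rfl
          rw [hcomap, ← f.map_rel_iff (a := w₁.1) (b := w₂.1)]
          exact descendVert_adj F hur hvr (f w₁.1) (f w₂.1) _ _
        have hc' : Fintype.card V' ≤ n := by
          have : Fintype.card V' < Fintype.card V :=
            Fintype.card_subtype_lt (x := r) (by simp)
          omega
        have huv' : F'.Adj u' v' := huv
        have htw' : ∀ w : V', w ≠ u' → w ≠ v' → (F'.Adj w u' ↔ F'.Adj w v') := by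
          intro w hwu hwv
          have h1 : w.1 ≠ u := fun h => hwu (Subtype.ext h)
          have h2 : w.1 ≠ v := fun h => hwv (Subtype.ext h)
          exact htw w.1 h1 h2
        exact ih V' (Subtype.fintype _) F' u' v' hc' huv' htw' x y
          ⟨⟨⟨g, hginj⟩, fun {w₁ w₂} => hgrel w₁ w₂⟩⟩
      · -- every vertex other than u, v occurs as a "genuine" vertex of the copy
        push_neg at hR
        have hsurj : ∀ r : V, r ≠ u → r ≠ v →
            ∃ (p : V) (a : {w : V // w ≠ u ∧ w ≠ v}), f p = Sum.inl a ∧ a.1 = r :=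
          fun r h1 h2 => hR r h1 h2
        have hne2 : (1:ℕ) < Fintype.card V :=
          Fintype.one_lt_card_iff_nontrivial.mpr ⟨⟨u, v, huv.ne⟩⟩
        set sR : Finset V := Finset.univ.filter (fun w => (f w).isRight) with hsR
        have hscompl : ∀ w : V, w ∉ sR ↔ ∃ a, f w = Sum.inl a := by
          intro w
          simp only [hsR, Finset.mem_filter, Finset.mem_univ, true_and]
          constructor
          · intro h
            rcases hw : f w with a | c
            · exact ⟨a, rfl⟩
            · rw [hw] at h; simp at h
          · rintro ⟨a, ha⟩; rw [ha]; simp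
        have hcompl_card : sRᶜ.card = Fintype.card V - 2 := by
          have ht : (Finset.univ \ ({u, v} : Finset V)).card = Fintype.card V - 2 := by
            rw [Finset.card_sdiff_of_subset (Finset.subset_univ _), Finset.card_univ,
              Finset.card_pair huv.ne]
          rw [← ht]
          apply Finset.card_nbij (i := fun w => eproj u v (f w))
          · intro w hw
            rw [Finset.mem_coe, Finset.mem_compl, hscompl] at hw
            obtain ⟨a, ha⟩ := hw
            show eproj u v (f w) ∈ _
            rw [ha, eproj_inl]
            simp [a.2.1, a.2.2]
          · intro w₁ hw₁ w₂ hw₂ h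
            rw [Finset.mem_coe, Finset.mem_compl, hscompl] at hw₁ hw₂
            obtain ⟨a₁, ha₁⟩ := hw₁
            obtain ⟨a₂, ha₂⟩ := hw₂
            change eproj u v (f w₁) = eproj u v (f w₂) at h
            rw [ha₁, ha₂, eproj_inl, eproj_inl] at h
            apply f.injective
            rw [ha₁, ha₂, Subtype.ext h]
          · intro r hr
            simp only [Finset.coe_sdiff, Finset.coe_univ, Set.mem_diff, Set.mem_univ,
              true_and, Finset.coe_insert, Set.mem_insert_iff, Finset.coe_singleton,
              Set.mem_singleton_iff, not_or] at hr
            obtain ⟨p, a, hpa, har⟩ := hsurj r hr.1 hr.2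
            refine ⟨p, ?_, ?_⟩
            · rw [Finset.mem_coe, Finset.mem_compl, hscompl]
              exact ⟨a, hpa⟩
            · show eproj u v (f p) = r
              rw [hpa, eproj_inl, har]
        have hs2 : sR.card = 2 := by
          have h1 := Finset.card_compl sR
          have h2 : sR.card ≤ Fintype.card V := by
            rw [← Finset.card_univ]
            exact Finset.card_le_univ sR
          omega
        obtain ⟨p₁, p₂, hp12, hs⟩ := Finset.card_eq_two.mp hs2
        obtain ⟨c₁, hc₁⟩ : ∃ c, f p₁ = Sum.inr c := by
          have hin : p₁ ∈ sR := by rw [hs]; simp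
          rw [hsR, Finset.mem_filter] at hin
          rcases hw : f p₁ with a | c
          · rw [hw] at hin; simp at hin
          · exact ⟨c, rfl⟩
        obtain ⟨c₂, hc₂⟩ : ∃ c, f p₂ = Sum.inr c := by
          have hin : p₂ ∈ sR := by rw [hs]; simp
          rw [hsR, Finset.mem_filter] at hin
          rcases hw : f p₂ with a | c
          · rw [hw] at hin; simp at hin
          · exact ⟨c, rfl⟩
        have hother : ∀ w, w ≠ p₁ → w ≠ p₂ → ∃ a, f w = Sum.inl a := by
          intro w h1 h2
          apply (hscompl w).mp
          rw [hs]
          simp [h1, h2]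
        set g : V → V := fun w => if w = p₁ then u else if w = p₂ then v
          else eproj u v (f w) with hg
        have hgp₁ : g p₁ = u := by simp [hg]
        have hgp₂ : g p₂ = v := by
          change (if p₂ = p₁ then u else if p₂ = p₂ then v else eproj u v (f p₂)) = v
          rw [if_neg (Ne.symm hp12), if_pos rfl]
        have hgp₁' : g p₁ = u := hgp₁
        have hgval : ∀ w, w ≠ p₁ → w ≠ p₂ →
            ∃ a : {w : V // w ≠ u ∧ w ≠ v}, f w = Sum.inl a ∧ g w = a.1 := by
          intro w h1 h2
          obtain ⟨a, ha⟩ := hother w h1 h2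
          refine ⟨a, ha, ?_⟩
          change (if w = p₁ then u else if w = p₂ then v else eproj u v (f w)) = a.1
          rw [if_neg h1, if_neg h2, ha, eproj_inl]
        have hginj : Function.Injective g := by
          intro w₁ w₂ h
          rcases eq_or_ne w₁ p₁ with h11 | h11
          · rcases eq_or_ne w₂ p₁ with h21 | h21
            · exact h11.trans h21.symm
            rcases eq_or_ne w₂ p₂ with h22 | h22
            · rw [h11, h22, hgp₁, hgp₂] at h
              exact absurd h huv.ne
            · obtain ⟨a, _, hval⟩ := hgval w₂ h21 h22
              rw [h11, hgp₁, hval] at h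
              exact absurd h.symm a.2.1
          rcases eq_or_ne w₁ p₂ with h12 | h12
          · rcases eq_or_ne w₂ p₁ with h21 | h21
            · rw [h12, h21, hgp₂, hgp₁] at h
              exact absurd h.symm huv.ne
            rcases eq_or_ne w₂ p₂ with h22 | h22
            · exact h12.trans h22.symm
            · obtain ⟨a, _, hval⟩ := hgval w₂ h21 h22
              rw [h12, hgp₂, hval] at h
              exact absurd h.symm a.2.2
          obtain ⟨a₁, ha₁, hval₁⟩ := hgval w₁ h11 h12
          rcases eq_or_ne w₂ p₁ with h21 | h21
          · rw [h21, hgp₁, hval₁] at h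
            exact absurd h a₁.2.1
          rcases eq_or_ne w₂ p₂ with h22 | h22
          · rw [h22, hgp₂, hval₁] at h
            exact absurd h a₁.2.2
          obtain ⟨a₂, ha₂, hval₂⟩ := hgval w₂ h21 h22
          rw [hval₁, hval₂] at h
          apply f.injective
          rw [ha₁, ha₂, Subtype.ext h]
        have hgrel : ∀ w₁ w₂ : V,
            (F.deleteEdges {s(u,v)}).Adj (g w₁) (g w₂) ↔ F.Adj w₁ w₂ := by
          intro w₁ w₂
          rw [← f.map_rel_iff (a := w₁) (b := w₂)]
          rcases eq_or_ne w₁ p₁ with h11 | h11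
          · rcases eq_or_ne w₂ p₁ with h21 | h21
            · rw [h11, h21]
              exact iff_of_false (fun h => (F.deleteEdges {s(u,v)}).irrefl h)
                (fun h => (explode F u v x y).irrefl h)
            rcases eq_or_ne w₂ p₂ with h22 | h22
            · rw [h11, h22, hgp₁, hgp₂, hc₁, hc₂]
              exact iff_of_false (deleteEdge_not_adj F u v)
                (explode_not_adj_inr F u v x y c₁ c₂)
            · obtain ⟨a, ha, hval⟩ := hgval w₂ h21 h22
              rw [h11, hgp₁, hval, ha, hc₁, adj_comm,
                deleteEdge_adj_of_ne F _ a.2.1 a.2.2, explode_adj_inr_inl]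
              cases c₁ with
              | inl i => exact Iff.rfl
              | inr j => exact htw a.1 a.2.1 a.2.2
          rcases eq_or_ne w₁ p₂ with h12 | h12
          · rcases eq_or_ne w₂ p₁ with h21 | h21
            · rw [h12, h21, hgp₂, hgp₁, hc₁, hc₂]
              exact iff_of_false (deleteEdge_not_adj' F u v)
                (explode_not_adj_inr F u v x y c₂ c₁)
            rcases eq_or_ne w₂ p₂ with h22 | h22
            · rw [h12, h22]
              exact iff_of_false (fun h => (F.deleteEdges {s(u,v)}).irrefl h)
                (fun h => (explode F u v x y).irrefl h)
            · obtain ⟨a, ha, hval⟩ := hgval w₂ h21 h22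
              rw [h12, hgp₂, hval, ha, hc₂, adj_comm,
                deleteEdge_adj_of_ne F _ a.2.1 a.2.2, explode_adj_inr_inl]
              cases c₂ with
              | inl i => exact (htw a.1 a.2.1 a.2.2).symm
              | inr j => exact Iff.rfl
          obtain ⟨a₁, ha₁, hval₁⟩ := hgval w₁ h11 h12
          rcases eq_or_ne w₂ p₁ with h21 | h21
          · rw [h21, hval₁, hgp₁, ha₁, hc₁,
              deleteEdge_adj_of_ne F _ a₁.2.1 a₁.2.2, explode_adj_inl_inr]
            cases c₁ with
            | inl i => exact Iff.rfl
            | inr j => exact htw a₁.1 a₁.2.1 a₁.2.2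
          rcases eq_or_ne w₂ p₂ with h22 | h22
          · rw [h22, hval₁, hgp₂, ha₁, hc₂,
              deleteEdge_adj_of_ne F _ a₁.2.1 a₁.2.2, explode_adj_inl_inr]
            cases c₂ with
            | inl i => exact (htw a₁.1 a₁.2.1 a₁.2.2).symm
            | inr j => exact Iff.rfl
          obtain ⟨a₂, ha₂, hval₂⟩ := hgval w₂ h21 h22
          rw [hval₁, hval₂, ha₁, ha₂,
            deleteEdge_adj_of_ne F _ a₁.2.1 a₁.2.2, explode_adj_inl_inl]
        exact no_emb_deleteEdge F huv ⟨⟨⟨g, hginj⟩, fun {w₁ w₂} => hgrel w₁ w₂⟩⟩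

/-- Every graph `H` with at least two vertices has a critical edge, or its complement
`Hᶜ` has one: an edge `{u,v}` such that no explosion along it contains an induced copy
of the respective graph. -/
theorem stmt17 {V : Type} [Fintype V] (H : SimpleGraph V) (h2 : 2 ≤ Fintype.card V) :
    (∃ u v, H.Adj u v ∧ ∀ x y : ℕ,
        ¬ ∃ S : Set (ExplodedVertex V u v x y),
            Nonempty (((explode H u v x y).induce S) ≃g H)) ∨
    (∃ u v, Hᶜ.Adj u v ∧ ∀ x y : ℕ,
        ¬ ∃ S : Set (ExplodedVertex V u v x y),
            Nonempty (((explode Hᶜ u v x y).induce S) ≃g Hᶜ)) := by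
  classical
  by_cases hA : ∃ u v, H.Adj u v ∧ ∀ w, w ≠ u → w ≠ v → (H.Adj w u ↔ H.Adj w v)
  · left
    obtain ⟨u, v, huv, htw⟩ := hA
    refine ⟨u, v, huv, ?_⟩
    rintro x y ⟨S, ⟨e⟩⟩
    exact crit_of_true_twins (Fintype.card V) V inferInstance H u v le_rfl huv htw x y
      ⟨(SimpleGraph.Embedding.induce S).comp e.symm.toEmbedding⟩
  · right
    have hncomp : ∃ u v : V, u ≠ v ∧ ¬H.Adj u v := by
      by_contra hcomp
      push_neg at hcomp
      have hnt : Nontrivial V := Fintype.one_lt_card_iff_nontrivial.mp (by omega)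
      obtain ⟨u, v, hne⟩ := exists_pair_ne V
      exact hA ⟨u, v, hcomp u v hne, fun w hwu hwv =>
        ⟨fun _ => hcomp w v hwv, fun _ => hcomp w u hwu⟩⟩
    obtain ⟨u, v, hne, hnadj⟩ := hncomp
    have hcadj : Hᶜ.Adj u v := (H.compl_adj _ _).mpr ⟨hne, hnadj⟩
    refine ⟨u, v, hcadj, ?_⟩
    rintro x y ⟨S, ⟨e⟩⟩
    have hnt : ∀ p q : V, (∀ z, Hᶜ.Adj p z ↔ Hᶜ.Adj q z) → p = q := by
      intro p q hpq
      by_contra hpqne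
      apply hA
      have hnadjc : ¬ Hᶜ.Adj p q := fun hadj => (Hᶜ).irrefl ((hpq q).mp hadj)
      have hadjH : H.Adj p q := by
        by_contra hn
        exact hnadjc ((H.compl_adj _ _).mpr ⟨hpqne, hn⟩)
      refine ⟨p, q, hadjH, ?_⟩
      intro w hwp hwq
      have h1 := hpq w
      rw [H.compl_adj, H.compl_adj] at h1
      have hiff : ¬H.Adj p w ↔ ¬H.Adj q w := by
        constructor
        · intro hnp
          exact (h1.mp ⟨Ne.symm hwp, hnp⟩).2
        · intro hnq
          exact (h1.mpr ⟨Ne.symm hwq, hnq⟩).2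
      have h2 : H.Adj p w ↔ H.Adj q w := not_iff_not.mp hiff
      rw [H.adj_comm w p, H.adj_comm w q]
      exact h2
    exact crit_of_no_false_twins Hᶜ hcadj hnt x y
      ⟨(SimpleGraph.Embedding.induce S).comp e.symm.toEmbedding⟩
end
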